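/- arXiv:1406.1766 — 3 statements merged into one kernel-verified Lean document; each statement's English description precedes it below -/
import Mathlib

section
/- Every (Q_n, Q_m)-semi-saturated graph with m ≥ 2 is connected, and hence has at least 2^n − 1 edges. -/
/-- The hypercube graph `Q_n` on vertex set `{0,1}^n`. -/
def Qc (n : ℕ) : SimpleGraph (Fin n → ZMod 2) :=
  SimpleGraph.fromRel (fun x y => hammingDist x y = 1)

/-- `f` is an (injective, edge-preserving) copy of the cube `Q_m` in the graph `G`. -/
def IsCubeCopy (m : ℕ) {V : Type*} (G : SimpleGraph V) (f : (Fin m → ZMod 2) → V) : Prop :=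
  Function.Injective f ∧ ∀ x y, (Qc m).Adj x y → G.Adj (f x) (f y)

/-- `G` contains a copy of the cube `Q_m`. -/
def ContainsCube (m : ℕ) {V : Type*} (G : SimpleGraph V) : Prop :=
  ∃ f, IsCubeCopy m G f

/-- `G` is `Q_m`-free. -/
def CubeFree (m : ℕ) {V : Type*} (G : SimpleGraph V) : Prop :=
  ¬ ContainsCube m G

/-- Adding the edge `e` to `G` creates a new copy of `Q_m`. -/
def NewCube (m : ℕ) {V : Type*} (G : SimpleGraph V) (e : Sym2 V) : Prop :=
  ∃ f, IsCubeCopy m (G ⊔ SimpleGraph.fromEdgeSet {e}) f ∧ ¬ IsCubeCopy m G f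

/-- `G` is `(Q_n, Q_m)`-semi-saturated. -/
def SemiSaturated (n m : ℕ) (G : SimpleGraph (Fin n → ZMod 2)) : Prop :=
  G ≤ Qc n ∧ ∀ e ∈ (Qc n).edgeSet, e ∉ G.edgeSet → NewCube m G e

/-- `G` is `(Q_n, Q_m)`-saturated. -/
def Saturated (n m : ℕ) (G : SimpleGraph (Fin n → ZMod 2)) : Prop :=
  G ≤ Qc n ∧ CubeFree m G ∧
    ∀ e ∈ (Qc n).edgeSet, e ∉ G.edgeSet → ContainsCube m (G ⊔ SimpleGraph.fromEdgeSet {e})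
lemma zmod2_add_one_ne : ∀ a : ZMod 2, a + 1 ≠ a := by decide

lemma hd_eq {k : ℕ} (x y : Fin k → ZMod 2) (s : Finset (Fin k))
    (h : ∀ i, x i ≠ y i ↔ i ∈ s) : hammingDist x y = s.card := by
  rw [hammingDist]
  congr 1
  ext i
  simp only [Finset.mem_filter, Finset.mem_univ, true_and]
  exact h i

lemma qc_adj {k : ℕ} {x y : Fin k → ZMod 2} :
    (Qc k).Adj x y ↔ hammingDist x y = 1 := by
  rw [Qc, SimpleGraph.fromRel_adj]
  constructor
  · rintro ⟨_, h | h⟩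
    · exact h
    · rwa [hammingDist_comm]
  · intro h
    exact ⟨fun he => by simp [he, hammingDist_self] at h, Or.inl h⟩

lemma hamming_update {k : ℕ} (x : Fin k → ZMod 2) (j : Fin k) :
    hammingDist x (Function.update x j (x j + 1)) = 1 := by
  rw [hd_eq x _ {j}]
  · simp
  · intro i
    rcases eq_or_ne i j with rfl | hij
    · simp [Function.update_apply, (zmod2_add_one_ne (x i)).symm]
    · simp [Function.update_apply, hij]

lemma reach_of_qn_adj {n m : ℕ} (hm : 2 ≤ m) {G : SimpleGraph (Fin n → ZMod 2)}
    (hsat : SemiSaturated n m G) {x y : Fin n → ZMod 2} (hxy : (Qc n).Adj x y) :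
    G.Reachable x y := by
  by_cases hG : G.Adj x y
  · exact hG.reachable
  have he : s(x, y) ∈ (Qc n).edgeSet := hxy
  have hne : s(x, y) ∉ G.edgeSet := hG
  obtain ⟨f, ⟨hinj, hadj⟩, hnot⟩ := hsat.2 _ he hne
  have hab' : ∃ a b, (Qc m).Adj a b ∧ ¬ G.Adj (f a) (f b) := by
    by_contra h
    push_neg at h
    exact hnot ⟨hinj, h⟩
  obtain ⟨a, b, hab, hnadj⟩ := hab'
  have hsup := hadj a b hab
  rw [SimpleGraph.sup_adj, SimpleGraph.fromEdgeSet_adj] at hsup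
  rcases hsup with hsup | ⟨heq, _⟩
  · exact absurd hsup hnadj
  rw [Set.mem_singleton_iff] at heq
  -- differing coordinate of a and b
  have hd : hammingDist a b = 1 := qc_adj.mp hab
  rw [hammingDist] at hd
  obtain ⟨i, hi⟩ := Finset.card_eq_one.mp hd
  have habi : a i ≠ b i := by
    have : i ∈ ({i | a i ≠ b i} : Finset (Fin m)) := by rw [hi]; simp
    simpa using this
  have hother : ∀ j, j ≠ i → a j = b j := by
    intro j hj
    by_contra hja
    have : j ∈ ({i | a i ≠ b i} : Finset (Fin m)) := by simpa using hja
    rw [hi, Finset.mem_singleton] at this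
    exact hj this
  have : Nontrivial (Fin m) := Fin.nontrivial_iff_two_le.mpr hm
  obtain ⟨j, hj⟩ := exists_ne i
  set a' := Function.update a j (a j + 1) with ha'
  set b' := Function.update b j (b j + 1) with hb'
  have ha'j : a' j = a j + 1 := by simp [ha']
  have hb'j : b' j = b j + 1 := by simp [hb']
  have ha'a : a' ≠ a := fun h => zmod2_add_one_ne (a j) (by rw [← ha'j, h])
  have hb'b : b' ≠ b := fun h => zmod2_add_one_ne (b j) (by rw [← hb'j, h])
  have hajbj : a j = b j := hother j hj
  have ha'b : a' ≠ b := by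
    intro h
    have := congrFun h j
    rw [ha'j, hajbj] at this
    exact zmod2_add_one_ne (b j) this
  have hb'a : b' ≠ a := by
    intro h
    have := congrFun h j
    rw [hb'j, ← hajbj] at this
    exact zmod2_add_one_ne (a j) this
  -- the three cube edges
  have e1 : (Qc m).Adj a a' := qc_adj.mpr (hamming_update a j)
  have e3 : (Qc m).Adj b' b := ((Qc m).adj_symm (qc_adj.mpr (hamming_update b j)))
  have e2 : (Qc m).Adj a' b' := by
    rw [qc_adj, hd_eq a' b' {i}]
    · simp
    · intro k
      rcases eq_or_ne k i with rfl | hki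
      · simp only [Finset.mem_singleton]
        have hkj : k ≠ j := fun h => hj h.symm
        simp [ha', hb', Function.update_apply, hkj, habi]
      · simp only [Finset.mem_singleton, hki, iff_false, not_not]
        rcases eq_or_ne k j with rfl | hkj
        · simp [ha', hb', hajbj]
        · simp [ha', hb', Function.update_apply, hkj, hother k hki]
  -- a cube edge not equal to {a,b} maps into G
  have inG : ∀ u v : Fin m → ZMod 2, (Qc m).Adj u v →
      ¬((u = a ∧ v = b) ∨ (u = b ∧ v = a)) → G.Adj (f u) (f v) := by
    intro u v huv hnot'
    have := hadj u v huv
    rw [SimpleGraph.sup_adj, SimpleGraph.fromEdgeSet_adj] at this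
    rcases this with h | ⟨h, _⟩
    · exact h
    rw [Set.mem_singleton_iff, ← heq, Sym2.eq_iff] at h
    rcases h with ⟨h1, h2⟩ | ⟨h1, h2⟩
    · exact absurd (Or.inl ⟨hinj h1, hinj h2⟩) hnot'
    · exact absurd (Or.inr ⟨hinj h1, hinj h2⟩) hnot'
  have g1 : G.Adj (f a) (f a') := inG a a' e1 (by
    rintro (⟨-, h⟩ | ⟨h, -⟩)
    · exact ha'b h
    · exact hab.ne h)
  have g2 : G.Adj (f a') (f b') := inG a' b' e2 (by
    rintro (⟨h, -⟩ | ⟨-, h⟩)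
    · exact ha'a h
    · exact hb'a h)
  have g3 : G.Adj (f b') (f b) := inG b' b e3 (by
    rintro (⟨h, -⟩ | ⟨-, h⟩)
    · exact hb'a h
    · exact hab.ne h.symm)
  have hr : G.Reachable (f a) (f b) :=
    (g1.reachable.trans g2.reachable).trans g3.reachable
  rw [Sym2.eq_iff] at heq
  rcases heq with ⟨h1, h2⟩ | ⟨h1, h2⟩
  · rwa [h1, h2] at hr
  · rw [h1, h2] at hr
    exact hr.symm

lemma conn_card {V : Type*} [Fintype V] {G : SimpleGraph V} (h : G.Connected) :
    Fintype.card V - 1 ≤ G.edgeSet.ncard := by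
  classical
  obtain ⟨root⟩ := h.nonempty
  choose p hp using fun v => (h v root).exists_walk_length_eq_dist
  rw [Set.ncard_eq_toFinset_card']
  have hcard : (Finset.univ.erase root).card = Fintype.card V - 1 := by
    rw [Finset.card_erase_of_mem (Finset.mem_univ _), Finset.card_univ]
  rw [← hcard]
  apply Finset.card_le_card_of_injOn (fun v => s(v, (p v).getVert 1))
  · intro v hv
    have hne : v ≠ root := Finset.ne_of_mem_erase hv
    have hnil : ¬ (p v).Nil := SimpleGraph.Walk.not_nil_of_ne hne
    have : G.Adj v ((p v).getVert 1) := (p v).adj_snd hnil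
    simpa [Set.mem_toFinset] using this
  · intro v hv w hw hvw
    by_contra hne'
    have hvr : v ≠ root := Finset.ne_of_mem_erase hv
    have hwr : w ≠ root := Finset.ne_of_mem_erase hw
    have hnv : ¬ (p v).Nil := SimpleGraph.Walk.not_nil_of_ne hvr
    have hnw : ¬ (p w).Nil := SimpleGraph.Walk.not_nil_of_ne hwr
    rw [Sym2.eq_iff] at hvw
    rcases hvw with ⟨h1, h2⟩ | ⟨h1, h2⟩
    · exact hne' h1
    -- v = (p w).getVert 1, (p v).getVert 1 = w
    have key : ∀ (a b : V) (ha : a ≠ root), (p a).getVert 1 = b →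
        G.dist b root + 1 ≤ G.dist a root := by
      intro a b ha hab
      have hna : ¬ (p a).Nil := SimpleGraph.Walk.not_nil_of_ne ha
      have hd := G.dist_le ((p a).tail.copy hab rfl)
      rw [SimpleGraph.Walk.length_copy] at hd
      have hlen2 : (p a).tail.length + 1 = (p a).length :=
        SimpleGraph.Walk.length_tail_add_one hna
      have := hp a
      omega
    have k1 := key v w hvr h2
    have k2 := key w v hwr h1.symm
    omega


lemma pre_of_semisat {n m : ℕ} (hm : 2 ≤ m) {G : SimpleGraph (Fin n → ZMod 2)}
    (hsat : SemiSaturated n m G) : G.Preconnected := by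
  suffices key : ∀ (d : ℕ) (x y : Fin n → ZMod 2), hammingDist x y = d → G.Reachable x y by
    intro x y
    exact key _ x y rfl
  intro d
  induction d using Nat.strong_induction_on with
  | _ d ih =>
    intro x y hd
    rcases Nat.eq_zero_or_pos d with rfl | hdpos
    · rw [hammingDist_eq_zero] at hd
      exact hd ▸ SimpleGraph.Reachable.refl x
    · rw [hammingDist] at hd
      obtain ⟨i, hi⟩ := Finset.card_pos.mp (hd ▸ hdpos)
      have hxyi : x i ≠ y i := by simpa using hi
      set x' := Function.update x i (y i) with hx'
      have hxx' : (Qc n).Adj x x' := by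
        rw [qc_adj, hd_eq x x' {i}]
        · simp
        · intro k
          rcases eq_or_ne k i with rfl | hki
          · simp [hx', hxyi]
          · simp [hx', Function.update_apply, hki]
      have hstep : hammingDist x' y = d - 1 := by
        rw [hammingDist]
        have hfe : (Finset.univ.filter fun k => x' k ≠ y k) =
            (Finset.univ.filter fun k => x k ≠ y k).erase i := by
          ext k
          simp only [Finset.mem_filter, Finset.mem_univ, true_and, Finset.mem_erase]
          rcases eq_or_ne k i with rfl | hki
          · simp [hx']
          · simp [hx', Function.update_apply, hki]
        rw [hfe, Finset.card_erase_of_mem hi, hd]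
      exact (reach_of_qn_adj hm hsat hxx').trans (ih (d - 1) (by omega) x' y hstep)

/-- Every `(Q_n, Q_m)`-semi-saturated graph with `m ≥ 2` is connected, and hence has at
least `2^n - 1` edges. -/
theorem stmt_2 (n m : ℕ) (hm : 2 ≤ m) (G : SimpleGraph (Fin n → ZMod 2))
    (hsat : SemiSaturated n m G) :
    G.Connected ∧ 2 ^ n - 1 ≤ G.edgeSet.ncard := by
  have hconn : G.Connected := by
    rw [SimpleGraph.connected_iff]
    exact ⟨pre_of_semisat hm hsat, ⟨fun _ => 0⟩⟩
  refine ⟨hconn, ?_⟩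
  have hb := conn_card hconn
  have hcV : Fintype.card (Fin n → ZMod 2) = 2 ^ n := by
    simp [ZMod.card]
  omega
end

section
/- For all n and all m ≥ 1, s-sat(Q_n, Q_m) < (m² + m/2) · 2^n, where s-sat(Q_n, Q_m) is the minimum number of edges of a (Q_n, Q_m)-semi-saturated subgraph of the hypercube Q_n. -/
open Finset Function

abbrev Vn (n : ℕ) := Fin n → ZMod 2

noncomputable def eF {n : ℕ} (j : Fin n) : Vn n := Pi.single j 1

lemma zmod2_cases (a : ZMod 2) : a = 0 ∨ a = 1 := by revert a; decide

lemma zmod2_ne_iff : ∀ (a b : ZMod 2), a ≠ b ↔ b = a + 1 := by decide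

lemma eF_apply_same {n : ℕ} (j : Fin n) : eF j j = 1 := Pi.single_eq_same j 1

lemma eF_apply_ne {n : ℕ} {j i : Fin n} (h : i ≠ j) : eF j i = 0 :=
  Pi.single_eq_of_ne h 1

lemma hamming_one_iff {n : ℕ} (u v : Vn n) :
    hammingDist u v = 1 ↔ ∃ j, v = u + eF j := by
  constructor
  · intro h
    rw [hammingDist, Finset.card_eq_one] at h
    obtain ⟨j, hj⟩ := h
    refine ⟨j, funext fun i => ?_⟩
    by_cases hij : i = j
    · subst hij
      have : i ∈ Finset.filter (fun i => u i ≠ v i) Finset.univ := by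
        rw [hj]; exact Finset.mem_singleton_self i
      have hne : u i ≠ v i := (Finset.mem_filter.1 this).2
      have := (zmod2_ne_iff (u i) (v i)).1 hne
      simpa [Pi.add_apply, eF_apply_same] using this
    · have : i ∉ Finset.filter (fun i => u i ≠ v i) Finset.univ := by
        rw [hj]; simp [hij]
      have heq : u i = v i := by
        by_contra hne; exact this (by simp [hne])
      simp [Pi.add_apply, eF_apply_ne hij, ← heq]
  · rintro ⟨j, rfl⟩
    rw [hammingDist, Finset.card_eq_one]
    refine ⟨j, ?_⟩
    ext i
    simp only [Finset.mem_filter, Finset.mem_univ, true_and, Finset.mem_singleton]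
    constructor
    · intro hne
      by_contra hij
      exact hne (by simp [Pi.add_apply, eF_apply_ne hij])
    · rintro rfl
      simp [Pi.add_apply, eF_apply_same]

lemma qc_adj_iff {n : ℕ} (u v : Vn n) :
    (Qc n).Adj u v ↔ u ≠ v ∧ ∃ j, v = u + eF j := by
  unfold Qc
  rw [SimpleGraph.fromRel_adj]
  constructor
  · rintro ⟨hne, h | h⟩
    · exact ⟨hne, (hamming_one_iff u v).1 h⟩
    · exact ⟨hne, (hamming_one_iff u v).1 (by rwa [hammingDist_comm])⟩
  · rintro ⟨hne, hj⟩
    exact ⟨hne, Or.inl ((hamming_one_iff u v).2 hj)⟩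

/-- Fiber counting for a surjective hom between finite abelian groups. -/
lemma fiber_card {G H : Type*} [AddCommGroup G] [AddCommGroup H] [Finite G] [Finite H]
    (f : G →+ H) (hf : Function.Surjective f) (h : H) :
    Nat.card {g // f g = h} * Nat.card H = Nat.card G := by
  obtain ⟨g₀, hg₀⟩ := hf h
  have e1 : {g // f g = h} ≃ f.ker := by
    refine ⟨fun p => ⟨p.1 - g₀, ?_⟩, fun k => ⟨k.1 + g₀, ?_⟩, ?_, ?_⟩
    · simp [AddMonoidHom.mem_ker, map_sub, p.2, hg₀]
    · have hk : f k.1 = 0 := k.2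
      simp [map_add, hk, hg₀]
    · intro p; ext; simp
    · intro k; ext; simp
  have e2 : (G ⧸ f.ker) ≃ H := (QuotientAddGroup.quotientKerEquivOfSurjective f hf).toEquiv
  have h3 := AddSubgroup.card_eq_card_quotient_mul_card_addSubgroup (f.ker)
  rw [Nat.card_congr e1, Nat.card_congr e2.symm]
  rw [h3]; ring


attribute [local instance] Classical.propDecidable

lemma add_eF_add_eF {n : ℕ} (u : Vn n) (j : Fin n) : u + eF j + eF j = u := by
  ext i
  simp only [Pi.add_apply]
  rw [add_assoc, CharTwo.add_self_eq_zero, add_zero]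

lemma card_Vn (n : ℕ) : Nat.card (Vn n) = 2 ^ n := by
  simp [Nat.card_eq_fintype_card]

lemma edge_decomp {n : ℕ} {G' : SimpleGraph (Vn n)} (hle : G' ≤ Qc n) :
    ∀ e ∈ G'.edgeSet, ∃ (u : Vn n) (j : Fin n), u j = 0 ∧ e = s(u, u + eF j) ∧ G'.Adj u (u + eF j) := by
  intro e
  induction e using Sym2.ind with
  | _ a b =>
    intro he
    have hab : G'.Adj a b := he
    have hq := hle hab
    rw [qc_adj_iff] at hq
    obtain ⟨hne, j, rfl⟩ := hq
    rcases zmod2_cases (a j) with h0 | h1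
    · exact ⟨a, j, h0, rfl, hab⟩
    · refine ⟨a + eF j, j, ?_, ?_, ?_⟩
      · simp only [Pi.add_apply, eF_apply_same, h1]; decide
      · rw [add_eF_add_eF]; exact Sym2.eq_swap
      · rw [add_eF_add_eF]; exact hab.symm

/-- Generic edge-count bound: if every edge of `G'` "charges" injectively into a type
`S`, then the edge count is bounded. Here: bound edges of any `G' ≤ Qc n` by pairs. -/
lemma edge_card_le {n : ℕ} {G' : SimpleGraph (Vn n)} (hle : G' ≤ Qc n)
    (P : Vn n → Fin n → Prop)
    (hP : ∀ u (j : Fin n), u j = 0 → G'.Adj u (u + eF j) →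
      (P u j ∨ P (u + eF j) j)) :
    G'.edgeSet.ncard ≤ Nat.card {p : Vn n × Fin n // P p.1 p.2} := by
  rw [← Nat.card_coe_set_eq]
  have hdec := edge_decomp hle
  have key : ∀ e : G'.edgeSet, ∃ p : Vn n × Fin n,
      P p.1 p.2 ∧ (e : Sym2 (Vn n)) = s(p.1, p.1 + eF p.2) := by
    rintro ⟨e, he⟩
    obtain ⟨u, j, hu0, hee, hadj⟩ := hdec e he
    rcases hP u j hu0 hadj with h | h
    · exact ⟨(u, j), h, hee⟩
    · refine ⟨(u + eF j, j), h, ?_⟩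
      show (e : Sym2 (Vn n)) = s(u + eF j, u + eF j + eF j)
      rw [hee, add_eF_add_eF u j]
      exact Sym2.eq_swap
  choose p hp1 hp2 using key
  have : Function.Injective (fun e : G'.edgeSet => (⟨p e, hp1 e⟩ : {p : Vn n × Fin n // P p.1 p.2})) := by
    intro e e' h
    have : p e = p e' := congrArg Subtype.val h
    apply Subtype.ext
    rw [hp2 e, hp2 e', this]
  exact Nat.card_le_card_of_injective _ this

lemma eval_surj {n : ℕ} (j : Fin n) :
    Function.Surjective (Pi.evalAddMonoidHom (fun _ : Fin n => ZMod 2) j) := by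
  intro c
  refine ⟨Pi.single j c, ?_⟩
  simp [Pi.evalAddMonoidHom]

lemma card_coord_fiber {n : ℕ} (j : Fin n) (c : ZMod 2) :
    Nat.card {y : Vn n // y j = c} * 2 = 2 ^ n := by
  have := fiber_card (Pi.evalAddMonoidHom (fun _ : Fin n => ZMod 2) j) (eval_surj j) c
  simpa [card_Vn, Nat.card_eq_fintype_card] using this

lemma qc_edge_bound (n : ℕ) : (Qc n).edgeSet.ncard * 2 ≤ n * 2 ^ n := by
  have h1 : (Qc n).edgeSet.ncard ≤ Nat.card {p : Vn n × Fin n // p.1 p.2 = 0} := by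
    apply edge_card_le le_rfl (fun u j => u j = 0)
    intro u j h0 _
    exact Or.inl h0
  have h2 : Nat.card {p : Vn n × Fin n // p.1 p.2 = 0} * 2 = n * 2 ^ n := by
    have e : {p : Vn n × Fin n // p.1 p.2 = 0} ≃ Σ j : Fin n, {y : Vn n // y j = 0} :=
      ⟨fun p => ⟨p.1.2, ⟨p.1.1, p.2⟩⟩, fun q => ⟨(q.2.1, q.1), q.2.2⟩,
        fun p => rfl, fun q => rfl⟩
    rw [Nat.card_congr e]
    rw [Nat.card_eq_fintype_card, Fintype.card_sigma]
    rw [Finset.sum_mul]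
    have : ∀ j : Fin n, Fintype.card {y : Vn n // y j = 0} * 2 = 2 ^ n := by
      intro j
      rw [← Nat.card_eq_fintype_card]
      exact card_coord_fiber j 0
    rw [Finset.sum_congr rfl (fun j _ => this j)]
    simp [Finset.sum_const, Finset.card_univ]
  calc (Qc n).edgeSet.ncard * 2 ≤ Nat.card {p : Vn n × Fin n // p.1 p.2 = 0} * 2 :=
        Nat.mul_le_mul_right 2 h1
    _ = n * 2 ^ n := h2


lemma semiSat_bot (n : ℕ) : SemiSaturated n 1 (⊥ : SimpleGraph (Vn n)) := by
  constructor
  · exact bot_le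
  · intro e he _
    obtain ⟨u, j, hu0, hee, hadj⟩ := edge_decomp le_rfl e he
    have huj : (u + eF j) j = 1 := by
      simp [Pi.add_apply, eF_apply_same, hu0]
    have heF : eF j ≠ 0 := by
      intro h
      have h1 : (1 : ZMod 2) = 0 := by
        simpa [eF_apply_same] using congrFun h j
      exact absurd h1 (by decide)
    have hne_uv : u ≠ u + eF j := by
      intro h
      rw [← h] at huj
      rw [hu0] at huj
      exact absurd huj (by decide)
    refine ⟨fun w => if w 0 = 0 then u else u + eF j, ⟨?_, ?_⟩, ?_⟩
    · intro w w' h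
      funext i
      have hi : i = 0 := Subsingleton.elim i 0
      subst hi
      rcases zmod2_cases (w 0) with h0 | h0 <;> rcases zmod2_cases (w' 0) with h1 | h1 <;>
        simp only [h0, h1, if_pos rfl, if_true, if_false] at h ⊢ <;> first
          | rfl
          | (exfalso; simp only [show (1:ZMod 2) ≠ 0 by decide, if_neg] at h;
             first | exact hne_uv h | exact hne_uv h.symm)
    · intro x y hxy
      rw [qc_adj_iff] at hxy
      obtain ⟨hxyne, _⟩ := hxy
      have hx0 : x 0 ≠ y 0 := by
        intro h
        apply hxyne
        funext i
        have hi : i = 0 := Subsingleton.elim i 0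
        rw [hi]; exact h
      rw [SimpleGraph.sup_adj]
      right
      rw [SimpleGraph.fromEdgeSet_adj]
      rcases zmod2_cases (x 0) with h0 | h0
      · have h1 : y 0 = 1 := by
          rcases zmod2_cases (y 0) with h | h
          · exact absurd (h0.trans h.symm) hx0
          · exact h
        simp only [h0, h1, if_pos rfl]
        norm_num
        exact ⟨hee.symm, heF⟩
      · have h1 : y 0 = 0 := by
          rcases zmod2_cases (y 0) with h | h
          · exact h
          · exact absurd (h0.trans h.symm) hx0
        simp only [h0, h1, if_pos rfl]
        norm_num
        constructor
        · rw [Sym2.eq_swap]; exact hee.symm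
        · first | exact heF | exact fun hh => heF hh.symm
    · rintro ⟨-, hadj2⟩
      have hQ1 : (Qc 1).Adj (fun _ => 0) (fun _ => 1) := by
        rw [qc_adj_iff]
        constructor
        · intro h
          have := congrFun h 0
          exact absurd this (by decide)
        · refine ⟨0, funext fun i => ?_⟩
          have hi : i = 0 := Subsingleton.elim i 0
          subst hi
          simp [Pi.add_apply, eF_apply_same]
      exact hadj2 _ _ hQ1

lemma final_of_nat_bound {n m : ℕ} (G : SimpleGraph (Vn n)) (hs : SemiSaturated n m G)
    (hb : G.edgeSet.ncard * 2 < (2 * m ^ 2 + m) * 2 ^ n) :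
    ∃ G : SimpleGraph (Fin n → ZMod 2), SemiSaturated n m G ∧
      (G.edgeSet.ncard : ℝ) < ((m : ℝ) ^ 2 + (m : ℝ) / 2) * 2 ^ n := by
  refine ⟨G, hs, ?_⟩
  have h2 : ((G.edgeSet.ncard * 2 : ℕ) : ℝ) < (((2 * m ^ 2 + m) * 2 ^ n : ℕ) : ℝ) := by
    exact_mod_cast hb
  push_cast at h2
  nlinarith [h2]


section Main

variable (n m ℓ : ℕ)

abbrev Wl (ℓ : ℕ) := Fin ℓ → ZMod 2

lemma zmod2_add_self (a : ZMod 2) : a + a = 0 := by revert a; decide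

lemma wadd_self {ℓ : ℕ} (w : Wl ℓ) : w + w = 0 := by
  funext i; exact zmod2_add_self _

lemma card_Wl : Fintype.card (Wl ℓ) = 2 ^ ℓ := by
  simp

lemma card_nonzeroWl : Fintype.card {w : Wl ℓ // w ≠ 0} = 2 ^ ℓ - 1 := by
  have h1 : Fintype.card {w : Wl ℓ // ¬ (w = 0)} = Fintype.card (Wl ℓ) - Fintype.card {w : Wl ℓ // w = 0} :=
    Fintype.card_subtype_compl _
  have h2 : Fintype.card {w : Wl ℓ // w = 0} = 1 := Fintype.card_subtype_eq 0
  calc Fintype.card {w : Wl ℓ // w ≠ 0} = Fintype.card (Wl ℓ) - Fintype.card {w : Wl ℓ // w = 0} := h1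
    _ = 2 ^ ℓ - 1 := by rw [h2, card_Wl]

/-- the labelling of `Fin (2^ℓ - 1)` by the nonzero vectors of `F_2^ℓ`. -/
noncomputable def lamE : Fin (2 ^ ℓ - 1) ≃ {w : Wl ℓ // w ≠ 0} :=
  (Fintype.equivFinOfCardEq (card_nonzeroWl ℓ)).symm

noncomputable def lam (r : Fin (2 ^ ℓ - 1)) : Wl ℓ := (lamE ℓ r).1

lemma lam_ne_zero (r : Fin (2 ^ ℓ - 1)) : lam ℓ r ≠ 0 := (lamE ℓ r).2

lemma lam_inj : Function.Injective (lam ℓ) := by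
  intro r r' h
  have : lamE ℓ r = lamE ℓ r' := Subtype.ext h
  exact (lamE ℓ).injective this

lemma lam_surj {w : Wl ℓ} (hw : w ≠ 0) : ∃ r, lam ℓ r = w := by
  obtain ⟨r, hr⟩ := (lamE ℓ).surjective ⟨w, hw⟩
  exact ⟨r, by rw [lam, hr]⟩

variable {n m ℓ : ℕ}

lemma block_decomp_unique {L t t' r r' : ℕ} (hr : r < L) (hr' : r' < L)
    (h : t * L + r = t' * L + r') : t = t' ∧ r = r' := by
  have h1 : (t * L + r) / L = t := by
    rw [Nat.mul_comm, Nat.mul_add_div (by omega)]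
    simp [Nat.div_eq_of_lt hr]
  have h2 : (t' * L + r') / L = t' := by
    rw [Nat.mul_comm, Nat.mul_add_div (by omega)]
    simp [Nat.div_eq_of_lt hr']
  have h3 : (t * L + r) % L = r := by
    rw [Nat.mul_comm, Nat.mul_add_mod]
    exact Nat.mod_eq_of_lt hr
  have h4 : (t' * L + r') % L = r' := by
    rw [Nat.mul_comm, Nat.mul_add_mod]
    exact Nat.mod_eq_of_lt hr'
  constructor
  · rw [← h1, ← h2, h]
  · rw [← h3, ← h4, h]

/-- the coordinate of block `t`, position `r`. -/
def idx (hfit : m * (2 ^ ℓ - 1) ≤ n) (t : Fin m) (r : Fin (2 ^ ℓ - 1)) : Fin n :=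
  ⟨t.1 * (2 ^ ℓ - 1) + r.1, by
    have h1 : t.1 * (2 ^ ℓ - 1) + r.1 < (t.1 + 1) * (2 ^ ℓ - 1) := by
      have := r.2; nlinarith [r.2]
    have h2 : (t.1 + 1) * (2 ^ ℓ - 1) ≤ m * (2 ^ ℓ - 1) :=
      Nat.mul_le_mul_right _ t.2
    omega⟩

lemma idx_inj {hfit : m * (2 ^ ℓ - 1) ≤ n} {t t' : Fin m} {r r' : Fin (2 ^ ℓ - 1)}
    (h : idx hfit t r = idx hfit t' r') : t = t' ∧ r = r' := by
  have hv : t.1 * (2 ^ ℓ - 1) + r.1 = t'.1 * (2 ^ ℓ - 1) + r'.1 := congrArg Fin.val h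
  obtain ⟨h1, h2⟩ := block_decomp_unique r.2 r'.2 hv
  exact ⟨Fin.ext h1, Fin.ext h2⟩

/-- the syndrome map of block `t`. -/
noncomputable def phi (hfit : m * (2 ^ ℓ - 1) ≤ n) (t : Fin m) : Vn n →+ Wl ℓ where
  toFun := fun y => ∑ r : Fin (2 ^ ℓ - 1), y (idx hfit t r) • lam ℓ r
  map_zero' := by simp
  map_add' := by
    intro y z
    rw [← Finset.sum_add_distrib]
    exact Finset.sum_congr rfl fun r _ => by rw [Pi.add_apply, add_smul]

lemma phi_eF_mem (hfit : m * (2 ^ ℓ - 1) ≤ n) (t : Fin m) (r : Fin (2 ^ ℓ - 1)) :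
    phi hfit t (eF (idx hfit t r)) = lam ℓ r := by
  show (∑ r' : Fin (2 ^ ℓ - 1), eF (idx hfit t r) (idx hfit t r') • lam ℓ r') = lam ℓ r
  rw [Finset.sum_eq_single r]
  · rw [eF_apply_same, one_smul]
  · intro r' _ hr'
    have : idx hfit t r' ≠ idx hfit t r := by
      intro h
      exact hr' (idx_inj h).2
    rw [eF_apply_ne this, zero_smul]
  · intro h
    exact absurd (Finset.mem_univ r) h

lemma phi_eF_not (hfit : m * (2 ^ ℓ - 1) ≤ n) (t : Fin m) {j : Fin n}
    (hj : ∀ r, idx hfit t r ≠ j) : phi hfit t (eF j) = 0 := by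
  show (∑ r' : Fin (2 ^ ℓ - 1), eF j (idx hfit t r') • lam ℓ r') = 0
  apply Finset.sum_eq_zero
  intro r' _
  rw [eF_apply_ne (hj r'), zero_smul]

end Main


section Main2

variable {n m ℓ : ℕ}

lemma exists_phi_one (hl2 : 2 ≤ ℓ) (hfit : m * (2 ^ ℓ - 1) ≤ n) (t : Fin m) (j : Fin n) :
    ∃ y₀ : Vn n, phi hfit t y₀ = 0 ∧ y₀ j = 1 := by
  by_cases hj : ∀ r, idx hfit t r ≠ j
  · exact ⟨eF j, phi_eF_not hfit t hj, eF_apply_same j⟩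
  · push_neg at hj
    obtain ⟨r₀, hr₀⟩ := hj
    set α := lam ℓ r₀ with hα
    have hαne : α ≠ 0 := lam_ne_zero ℓ r₀
    have hβ : ∃ β : Wl ℓ, β ≠ 0 ∧ β ≠ α := by
      by_contra hc
      push_neg at hc
      have hsub : (Finset.univ : Finset (Wl ℓ)) ⊆ {0, α} := by
        intro w _
        rcases eq_or_ne w 0 with h | h
        · simp [h]
        · simp [hc w h]
      have h1 : Fintype.card (Wl ℓ) ≤ 2 := by
        calc Fintype.card (Wl ℓ) = (Finset.univ : Finset (Wl ℓ)).card := rfl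
          _ ≤ ({0, α} : Finset (Wl ℓ)).card := Finset.card_le_card hsub
          _ ≤ 2 := Finset.card_insert_le _ _ |>.trans (by simp)
      rw [card_Wl] at h1
      have : (4:ℕ) ≤ 2 ^ ℓ := by
        calc (4:ℕ) = 2 ^ 2 := rfl
          _ ≤ 2 ^ ℓ := Nat.pow_le_pow_right (by norm_num) hl2
      omega
    obtain ⟨β, hβ0, hβα⟩ := hβ
    have hγ0 : α + β ≠ 0 := by
      intro h
      apply hβα
      calc β = β + (α + β) := by rw [h, add_zero]
        _ = α + (β + β) := by ring
        _ = α := by rw [wadd_self, add_zero]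
    obtain ⟨rβ, hrβ⟩ := lam_surj ℓ hβ0
    obtain ⟨rγ, hrγ⟩ := lam_surj ℓ hγ0
    refine ⟨eF j + eF (idx hfit t rβ) + eF (idx hfit t rγ), ?_, ?_⟩
    · rw [map_add, map_add]
      rw [← hr₀, phi_eF_mem, phi_eF_mem, phi_eF_mem]
      rw [hrβ, hrγ, ← hα]
      exact wadd_self (α + β)
    · have hrβ_ne : idx hfit t rβ ≠ j := by
        rw [← hr₀]
        intro h
        have h2 := (idx_inj h).2
        rw [h2] at hrβ
        exact hβα (hrβ.symm.trans hα.symm)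
      have hrγ_ne : idx hfit t rγ ≠ j := by
        rw [← hr₀]
        intro h
        have h2 := (idx_inj h).2
        rw [h2] at hrγ
        have h3 : α = α + β := hα.trans hrγ
        have h4 : (0 : Wl ℓ) = β := by
          calc (0 : Wl ℓ) = α + α := (wadd_self α).symm
            _ = α + (α + β) := by rw [← h3]
            _ = (α + α) + β := by ring
            _ = 0 + β := by rw [wadd_self]
            _ = β := zero_add β
        exact hβ0 h4.symm
      rw [Pi.add_apply, Pi.add_apply, eF_apply_same,
        eF_apply_ne (Ne.symm hrβ_ne), eF_apply_ne (Ne.symm hrγ_ne)]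
      decide

lemma exists_phi_w (hfit : m * (2 ^ ℓ - 1) ≤ n) (t : Fin m) (w : Wl ℓ) :
    ∃ y₁ : Vn n, phi hfit t y₁ = w := by
  rcases eq_or_ne w 0 with h | h
  · exact ⟨0, by rw [map_zero, h]⟩
  · obtain ⟨r, hr⟩ := lam_surj ℓ h
    exact ⟨eF (idx hfit t r), by rw [phi_eF_mem, hr]⟩

lemma psi_surj (hl2 : 2 ≤ ℓ) (hfit : m * (2 ^ ℓ - 1) ≤ n) (t : Fin m) (j : Fin n) :
    Function.Surjective
      ((phi hfit t).prod (Pi.evalAddMonoidHom (fun _ : Fin n => ZMod 2) j)) := by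
  rintro ⟨w, c⟩
  obtain ⟨y₁, hy₁⟩ := exists_phi_w hfit t w
  obtain ⟨y₀, hy₀, hy₀j⟩ := exists_phi_one hl2 hfit t j
  rcases eq_or_ne (y₁ j) c with h | h
  · refine ⟨y₁, ?_⟩
    rw [AddMonoidHom.prod_apply]
    exact Prod.ext hy₁ h
  · refine ⟨y₁ + y₀, ?_⟩
    have hc : c = y₁ j + 1 := (zmod2_ne_iff _ _).1 h
    have h2 : (y₁ + y₀) j = c := by
      rw [Pi.add_apply, hy₀j, hc]
    have h1 : phi hfit t (y₁ + y₀) = w := by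
      rw [map_add, hy₁, hy₀, add_zero]
    rw [AddMonoidHom.prod_apply]
    exact Prod.ext h1 h2

lemma card_phi_fiber (hl2 : 2 ≤ ℓ) (hfit : m * (2 ^ ℓ - 1) ≤ n) (t : Fin m) (j : Fin n)
    (w : Wl ℓ) (c : ZMod 2) :
    Nat.card {y : Vn n // phi hfit t y = w ∧ y j = c} * 2 ^ (ℓ + 1) = 2 ^ n := by
  have hs := psi_surj hl2 hfit t j
  have := fiber_card _ hs (w, c)
  have heq : {y : Vn n // ((phi hfit t).prod (Pi.evalAddMonoidHom (fun _ : Fin n => ZMod 2) j)) y = (w, c)}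
      ≃ {y : Vn n // phi hfit t y = w ∧ y j = c} := by
    apply Equiv.subtypeEquivRight
    intro y
    rw [AddMonoidHom.prod_apply, Prod.mk.injEq]
    rfl
  rw [Nat.card_congr heq] at this
  have hcard2 : Nat.card (Wl ℓ × ZMod 2) = 2 ^ (ℓ + 1) := by
    rw [Nat.card_eq_fintype_card, Fintype.card_prod, card_Wl]
    simp [pow_succ]
  rw [hcard2, card_Vn] at this
  exact this

end Main2


section Main3

variable {n m ℓ : ℕ}

def Hset (hfit : m * (2 ^ ℓ - 1) ≤ n) : Set (Vn n) := {y | ∃ t, phi hfit t y = 0}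

noncomputable def Gr (hfit : m * (2 ^ ℓ - 1) ≤ n) : SimpleGraph (Vn n) :=
  SimpleGraph.fromRel (fun u v => (Qc n).Adj u v ∧ u ∈ Hset hfit)

lemma gr_adj (hfit : m * (2 ^ ℓ - 1) ≤ n) (u v : Vn n) :
    (Gr hfit).Adj u v ↔ (Qc n).Adj u v ∧ (u ∈ Hset hfit ∨ v ∈ Hset hfit) := by
  rw [Gr, SimpleGraph.fromRel_adj]
  constructor
  · rintro ⟨hne, ⟨hq, hu⟩ | ⟨hq, hv⟩⟩
    · exact ⟨hq, Or.inl hu⟩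
    · exact ⟨hq.symm, Or.inr hv⟩
  · rintro ⟨hq, hu | hv⟩
    · exact ⟨hq.ne, Or.inl ⟨hq, hu⟩⟩
    · exact ⟨hq.ne, Or.inr ⟨hq.symm, hv⟩⟩

lemma gr_le (hfit : m * (2 ^ ℓ - 1) ≤ n) : Gr hfit ≤ Qc n := by
  intro u v h
  exact ((gr_adj hfit u v).1 h).1

lemma gr_count (hl2 : 2 ≤ ℓ) (hfit : m * (2 ^ ℓ - 1) ≤ n) :
    (Gr hfit).edgeSet.ncard * 2 ^ (ℓ + 1) ≤ m * ((n + (2 ^ ℓ - 1)) * 2 ^ n) := by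
  set L := 2 ^ ℓ - 1 with hL
  -- step 1 : charge edges to pairs
  have h1 : (Gr hfit).edgeSet.ncard ≤
      Nat.card {p : Vn n × Fin n //
        p.1 ∈ Hset hfit ∧ (p.1 p.2 = 0 ∨ p.1 + eF p.2 ∉ Hset hfit)} := by
    apply edge_card_le (gr_le hfit) (fun y j => y ∈ Hset hfit ∧ (y j = 0 ∨ y + eF j ∉ Hset hfit))
    intro u j h0 hadj
    rcases ((gr_adj hfit u _).1 hadj).2 with hu | hv
    · exact Or.inl ⟨hu, Or.inl h0⟩
    · by_cases hu : u ∈ Hset hfit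
      · exact Or.inl ⟨hu, Or.inl h0⟩
      · refine Or.inr ⟨hv, Or.inr ?_⟩
        rw [add_eF_add_eF]
        exact hu
  -- step 2 : cover the pair set by the 2m slice sets
  have h2 : Nat.card {p : Vn n × Fin n //
        p.1 ∈ Hset hfit ∧ (p.1 p.2 = 0 ∨ p.1 + eF p.2 ∉ Hset hfit)} ≤
      ∑ t : Fin m,
        (Nat.card {p : Vn n × Fin n // phi hfit t p.1 = 0 ∧ p.1 p.2 = 0}
          + Nat.card {p : Vn n × Fin n //
              phi hfit t p.1 = 0 ∧ p.1 p.2 = 1 ∧ ∃ r, idx hfit t r = p.2}) := by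
    classical
    rw [Nat.card_eq_fintype_card, Fintype.card_subtype]
    have hsub : Finset.univ.filter (fun p : Vn n × Fin n =>
        p.1 ∈ Hset hfit ∧ (p.1 p.2 = 0 ∨ p.1 + eF p.2 ∉ Hset hfit)) ⊆
        Finset.univ.biUnion (fun t : Fin m =>
          Finset.univ.filter (fun p : Vn n × Fin n => phi hfit t p.1 = 0 ∧ p.1 p.2 = 0)
          ∪ Finset.univ.filter (fun p : Vn n × Fin n =>
              phi hfit t p.1 = 0 ∧ p.1 p.2 = 1 ∧ ∃ r, idx hfit t r = p.2)) := by
      intro p hp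
      rw [Finset.mem_filter] at hp
      obtain ⟨-, ⟨t, ht⟩, hrest⟩ := hp
      rw [Finset.mem_biUnion]
      refine ⟨t, Finset.mem_univ t, ?_⟩
      rw [Finset.mem_union, Finset.mem_filter, Finset.mem_filter]
      rcases zmod2_cases (p.1 p.2) with h0 | h01
      · exact Or.inl ⟨Finset.mem_univ p, ht, h0⟩
      · rcases hrest with h0 | hnot
        · exact Or.inl ⟨Finset.mem_univ p, ht, h0⟩
        · refine Or.inr ⟨Finset.mem_univ p, ht, h01, ?_⟩
          by_contra hr
          push_neg at hr
          apply hnot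
          refine ⟨t, ?_⟩
          rw [map_add, ht, phi_eF_not hfit t hr, add_zero]
    calc (Finset.univ.filter _).card ≤ _ := Finset.card_le_card hsub
      _ ≤ ∑ t : Fin m, (Finset.univ.filter (fun p : Vn n × Fin n =>
            phi hfit t p.1 = 0 ∧ p.1 p.2 = 0)
          ∪ Finset.univ.filter (fun p : Vn n × Fin n =>
              phi hfit t p.1 = 0 ∧ p.1 p.2 = 1 ∧ ∃ r, idx hfit t r = p.2)).card :=
          Finset.card_biUnion_le
      _ ≤ _ := by
          apply Finset.sum_le_sum
          intro t _
          calc _ ≤ _ := Finset.card_union_le _ _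
            _ = _ := by
              rw [Nat.card_eq_fintype_card, Nat.card_eq_fintype_card,
                Fintype.card_subtype, Fintype.card_subtype]
  -- step 3 : count the slice sets
  have hA : ∀ t : Fin m,
      Nat.card {p : Vn n × Fin n // phi hfit t p.1 = 0 ∧ p.1 p.2 = 0} * 2 ^ (ℓ + 1)
        = n * 2 ^ n := by
    intro t
    have e : {p : Vn n × Fin n // phi hfit t p.1 = 0 ∧ p.1 p.2 = 0}
        ≃ Σ j : Fin n, {y : Vn n // phi hfit t y = 0 ∧ y j = 0} :=
      ⟨fun p => ⟨p.1.2, ⟨p.1.1, p.2⟩⟩, fun q => ⟨(q.2.1, q.1), q.2.2⟩,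
        fun p => rfl, fun q => rfl⟩
    rw [Nat.card_congr e, Nat.card_eq_fintype_card, Fintype.card_sigma, Finset.sum_mul]
    have : ∀ j : Fin n, Fintype.card {y : Vn n // phi hfit t y = 0 ∧ y j = 0} * 2 ^ (ℓ+1) = 2 ^ n := by
      intro j
      rw [← Nat.card_eq_fintype_card]
      exact card_phi_fiber hl2 hfit t j 0 0
    rw [Finset.sum_congr rfl (fun j _ => this j)]
    simp [Finset.sum_const, Finset.card_univ]
  have hB : ∀ t : Fin m,
      Nat.card {p : Vn n × Fin n // phi hfit t p.1 = 0 ∧ p.1 p.2 = 1 ∧ ∃ r, idx hfit t r = p.2}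
        * 2 ^ (ℓ + 1) ≤ L * 2 ^ n := by
    intro t
    classical
    have hinj : Function.Injective
        (fun p : {p : Vn n × Fin n // phi hfit t p.1 = 0 ∧ p.1 p.2 = 1 ∧ ∃ r, idx hfit t r = p.2} =>
          (⟨p.2.2.2.choose, ⟨p.1.1, ⟨p.2.1, by rw [p.2.2.2.choose_spec]; exact p.2.2.1⟩⟩⟩ :
            Σ r : Fin L, {y : Vn n // phi hfit t y = 0 ∧ y (idx hfit t r) = 1})) := by
      rintro ⟨⟨y, j⟩, hy⟩ ⟨⟨y', j'⟩, hy'⟩ h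
      have hfst := congrArg Sigma.fst h
      have hy1 : y = y' :=
        congrArg (fun s : Σ r : Fin L, {y : Vn n // phi hfit t y = 0 ∧ y (idx hfit t r) = 1} =>
          (s.2 : Vn n)) h
      have hj1 : j = j' := by
        have hspec : idx hfit t (hy.2.2.choose) = j := hy.2.2.choose_spec
        have hspec' : idx hfit t (hy'.2.2.choose) = j' := hy'.2.2.choose_spec
        have hfst2 : (hy.2.2.choose) = hy'.2.2.choose := by simpa using hfst
        rw [← hspec, ← hspec', hfst2]
      apply Subtype.ext
      exact Prod.ext hy1 hj1
    have hle := Nat.card_le_card_of_injective _ hinj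
    have hcard : Nat.card (Σ r : Fin L, {y : Vn n // phi hfit t y = 0 ∧ y (idx hfit t r) = 1})
        * 2 ^ (ℓ + 1) = L * 2 ^ n := by
      rw [Nat.card_eq_fintype_card, Fintype.card_sigma, Finset.sum_mul]
      have : ∀ r : Fin L, Fintype.card {y : Vn n // phi hfit t y = 0 ∧ y (idx hfit t r) = 1}
          * 2 ^ (ℓ+1) = 2 ^ n := by
        intro r
        rw [← Nat.card_eq_fintype_card]
        exact card_phi_fiber hl2 hfit t (idx hfit t r) 0 1
      rw [Finset.sum_congr rfl (fun r _ => this r)]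
      simp [Finset.sum_const, Finset.card_univ]
    calc _ ≤ Nat.card (Σ r : Fin L, {y : Vn n // phi hfit t y = 0 ∧ y (idx hfit t r) = 1})
          * 2 ^ (ℓ + 1) := Nat.mul_le_mul_right _ hle
      _ = L * 2 ^ n := hcard
  -- assemble
  calc (Gr hfit).edgeSet.ncard * 2 ^ (ℓ + 1)
      ≤ (∑ t : Fin m, (Nat.card {p : Vn n × Fin n // phi hfit t p.1 = 0 ∧ p.1 p.2 = 0}
          + Nat.card {p : Vn n × Fin n //
              phi hfit t p.1 = 0 ∧ p.1 p.2 = 1 ∧ ∃ r, idx hfit t r = p.2})) * 2 ^ (ℓ+1) :=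
        Nat.mul_le_mul_right _ (le_trans h1 h2)
    _ = ∑ t : Fin m, (Nat.card {p : Vn n × Fin n // phi hfit t p.1 = 0 ∧ p.1 p.2 = 0} * 2 ^ (ℓ+1)
          + Nat.card {p : Vn n × Fin n //
              phi hfit t p.1 = 0 ∧ p.1 p.2 = 1 ∧ ∃ r, idx hfit t r = p.2} * 2 ^ (ℓ+1)) := by
        rw [Finset.sum_mul]
        exact Finset.sum_congr rfl fun t _ => by rw [add_mul]
    _ ≤ ∑ t : Fin m, (n * 2 ^ n + L * 2 ^ n) := by
        apply Finset.sum_le_sum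
        intro t _
        exact add_le_add (le_of_eq (hA t)) (hB t)
    _ = m * ((n + L) * 2 ^ n) := by
        rw [Finset.sum_const, Finset.card_univ, Fintype.card_fin, smul_eq_mul]
        ring

end Main3


section Main4

variable {n m ℓ : ℕ}

lemma zmod2_ne_add_one (a : ZMod 2) : a ≠ a + 1 := by revert a; decide

lemma ne_add_eF (u : Vn n) (j : Fin n) : u ≠ u + eF j := by
  intro h
  have := congrFun h j
  rw [Pi.add_apply, eF_apply_same] at this
  exact zmod2_ne_add_one (u j) this

lemma gr_semisat (hm2 : 2 ≤ m) (hl2 : 2 ≤ ℓ) (hfit : m * (2 ^ ℓ - 1) ≤ n) :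
    SemiSaturated n m (Gr hfit) := by
  refine ⟨gr_le hfit, ?_⟩
  intro e he hne
  obtain ⟨u, i, hu0, hee, hadj⟩ := edge_decomp le_rfl e he
  -- both endpoints are non-hubs
  have huH : u ∉ Hset hfit := by
    intro hu
    apply hne
    rw [hee, SimpleGraph.mem_edgeSet, gr_adj]
    exact ⟨hadj, Or.inl hu⟩
  have hvH : u + eF i ∉ Hset hfit := by
    intro hv
    apply hne
    rw [hee, SimpleGraph.mem_edgeSet, gr_adj]
    exact ⟨hadj, Or.inr hv⟩
  have hphiu : ∀ t : Fin m, phi hfit t u ≠ 0 := by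
    intro t ht
    exact huH ⟨t, ht⟩
  -- the block containing i (if any)
  have hm0 : 0 < m := by omega
  set last : Fin m := ⟨m - 1, by omega⟩ with hlast
  set t₀ : Fin m := if h : ∃ t : Fin m, ∃ r, idx hfit t r = i then h.choose else ⟨0, hm0⟩ with ht₀
  have hgood : ∀ t : Fin m, t ≠ t₀ → ∀ r, idx hfit t r ≠ i := by
    intro t htne r hr
    have hex : ∃ t : Fin m, ∃ r, idx hfit t r = i := ⟨t, r, hr⟩
    apply htne
    rw [ht₀, dif_pos hex]
    obtain ⟨r', hr'⟩ := hex.choose_spec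
    exact (idx_inj (hr.trans hr'.symm)).1
  -- correction coordinates
  have hcorr_ex : ∀ t : Fin m, ∃ r, lam ℓ r = phi hfit t u := fun t => lam_surj ℓ (hphiu t)
  set corr : Fin m → Fin n := fun t => idx hfit t (hcorr_ex t).choose with hcorrdef
  have hcorr_phi : ∀ t, phi hfit t (eF (corr t)) = phi hfit t u := by
    intro t
    rw [hcorrdef]
    simp only
    rw [phi_eF_mem]
    exact (hcorr_ex t).choose_spec
  have hcorr_other : ∀ t t' : Fin m, t' ≠ t → phi hfit t' (eF (corr t)) = 0 := by
    intro t t' hne'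
    apply phi_eF_not
    intro r h
    exact hne' (idx_inj h).1
  have hcorr_ne_i : ∀ t : Fin m, t ≠ t₀ → corr t ≠ i := fun t ht => hgood t ht _
  -- the coordinate map of the cube copy
  set τ : Equiv.Perm (Fin m) := Equiv.swap last t₀ with hτ
  have hτlast : τ last = t₀ := Equiv.swap_apply_left _ _
  have hτne : ∀ k : Fin m, k ≠ last → τ k ≠ t₀ := by
    intro k hk h
    exact hk (τ.injective (h.trans hτlast.symm))
  set c : Fin m → Fin n := fun k => if k = last then i else corr (τ k) with hc
  have hclast : c last = i := by rw [hc]; simp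
  have hcne : ∀ k, k ≠ last → c k = corr (τ k) := by
    intro k hk; rw [hc]; simp [hk]
  have hc_inj : Function.Injective c := by
    intro k k' h
    by_cases h1 : k = last <;> by_cases h2 : k' = last
    · rw [h1, h2]
    · exfalso
      rw [h1, hclast, hcne k' h2] at h
      exact hcorr_ne_i (τ k') (hτne k' h2) h.symm
    · exfalso
      rw [h2, hclast, hcne k h1] at h
      exact hcorr_ne_i (τ k) (hτne k h1) h
    · rw [hcne k h1, hcne k' h2, hcorrdef] at h
      simp only at h
      exact τ.injective (idx_inj h).1
  -- the cube copy
  set f : (Fin m → ZMod 2) → Vn n := fun a => u + ∑ k, a k • eF (c k) with hf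
  have hsum_apply : ∀ (a : Fin m → ZMod 2) (k : Fin m),
      (∑ k', a k' • eF (c k')) (c k) = a k := by
    intro a k
    rw [Finset.sum_apply]
    rw [Finset.sum_eq_single k]
    · rw [Pi.smul_apply, eF_apply_same, smul_eq_mul, mul_one]
    · intro k' _ hk'
      rw [Pi.smul_apply, eF_apply_ne (fun h => hk' (hc_inj h).symm), smul_eq_mul, mul_zero]
    · intro h; exact absurd (Finset.mem_univ k) h
  have hf_apply : ∀ (a : Fin m → ZMod 2) (k : Fin m), f a (c k) = u (c k) + a k := by
    intro a k
    rw [hf]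
    simp only [Pi.add_apply]
    rw [hsum_apply]
  have hf_inj : Function.Injective f := by
    intro a b h
    funext k
    have h1 := congrFun h (c k)
    rw [hf_apply, hf_apply] at h1
    exact add_left_cancel h1
  have hf_step : ∀ (a : Fin m → ZMod 2) (k₀ : Fin m), f (a + eF k₀) = f a + eF (c k₀) := by
    intro a k₀
    rw [hf]
    simp only
    have hkey : (∑ k, (a + eF k₀) k • eF (c k))
        = (∑ k, a k • eF (c k)) + eF (c k₀) := by
      have h1 : ∀ k : Fin m, (a + eF k₀) k • eF (c k)
          = a k • eF (c k) + (eF k₀ k) • eF (c k) := by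
        intro k
        rw [Pi.add_apply, add_smul]
      rw [Finset.sum_congr rfl (fun k _ => h1 k), Finset.sum_add_distrib]
      congr 1
      rw [Finset.sum_eq_single k₀]
      · rw [eF_apply_same, one_smul]
      · intro k _ hk
        rw [eF_apply_ne hk, zero_smul]
      · intro h; exact absurd (Finset.mem_univ k₀) h
    rw [hkey, ← add_assoc]
  -- hub membership from nonzero non-last coordinates
  have hub_mem : ∀ (a : Fin m → ZMod 2) (s : Fin m), s ≠ last → a s = 1 →
      f a ∈ Hset hfit := by
    intro a s hs has
    refine ⟨τ s, ?_⟩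
    have hmap : phi hfit (τ s) (f a)
        = phi hfit (τ s) u + ∑ k, a k • phi hfit (τ s) (eF (c k)) := by
      rw [hf]
      simp only
      rw [map_add, map_sum]
      congr 1
      apply Finset.sum_congr rfl
      intro k _
      rcases zmod2_cases (a k) with h | h <;> rw [h]
      · rw [zero_smul, zero_smul, map_zero]
      · rw [one_smul, one_smul]
    rw [hmap]
    have hsum : (∑ k, a k • phi hfit (τ s) (eF (c k))) = phi hfit (τ s) u := by
      rw [Finset.sum_eq_single s]
      · rw [hcne s hs, hcorr_phi, has, one_smul]
      · intro k _ hk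
        by_cases hkl : k = last
        · rw [hkl, hclast, phi_eF_not hfit (τ s) (hgood (τ s) (hτne s hs)), smul_zero]
        · rw [hcne k hkl, hcorr_other (τ k) (τ s) (fun h => hk (τ.injective h).symm), smul_zero]
      · intro h; exact absurd (Finset.mem_univ s) h
    rw [hsum]
    exact wadd_self _
  -- the all-zero-off-last case
  have hf_low : ∀ (a : Fin m → ZMod 2), (∀ k, k ≠ last → a k = 0) →
      f a = u + a last • eF i := by
    intro a ha
    rw [hf]
    simp only
    congr 1
    rw [Finset.sum_eq_single last]
    · rw [hclast]
    · intro k _ hk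
      rw [ha k hk, zero_smul]
    · intro h; exact absurd (Finset.mem_univ last) h
  -- now give the new cube copy
  refine ⟨f, ⟨hf_inj, ?_⟩, ?_⟩
  · intro a b hab
    rw [qc_adj_iff] at hab
    obtain ⟨hne_ab, k₀, rfl⟩ := hab
    rw [hf_step]
    have hQadj : (Qc n).Adj (f a) (f a + eF (c k₀)) := by
      rw [qc_adj_iff]
      exact ⟨ne_add_eF _ _, k₀ |> fun _ => ⟨c k₀, rfl⟩⟩
    by_cases hk₀ : k₀ = last
    · by_cases hex : ∃ s, s ≠ last ∧ a s = 1
      · obtain ⟨s, hs, has⟩ := hex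
        rw [SimpleGraph.sup_adj]
        left
        rw [gr_adj]
        exact ⟨hQadj, Or.inl (hub_mem a s hs has)⟩
      · push_neg at hex
        have ha0 : ∀ k, k ≠ last → a k = 0 := by
          intro k hk
          rcases zmod2_cases (a k) with h | h
          · exact h
          · exact absurd h (hex k hk)
        have hfa := hf_low a ha0
        rw [SimpleGraph.sup_adj]
        right
        rw [SimpleGraph.fromEdgeSet_adj]
        subst hk₀
        rw [hclast]
        constructor
        · rw [Set.mem_singleton_iff, hee]
          rcases zmod2_cases (a last) with h | h
          · rw [hfa, h, zero_smul, add_zero]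
          · rw [hfa, h, one_smul]
            have h2 : u + eF i + eF i = u := add_eF_add_eF u i
            rw [h2]
            exact Sym2.eq_swap
        · exact ne_add_eF _ _
    · rw [SimpleGraph.sup_adj]
      left
      rw [gr_adj]
      refine ⟨hQadj, ?_⟩
      rcases zmod2_cases (a k₀) with h | h
      · right
        rw [← hf_step]
        apply hub_mem _ k₀ hk₀
        rw [Pi.add_apply, h, eF_apply_same, zero_add]
      · left
        exact hub_mem a k₀ hk₀ h
  · rintro ⟨-, hadj2⟩
    have hQm : (Qc m).Adj 0 (eF last) := by
      rw [qc_adj_iff]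
      constructor
      · intro h
        have := congrFun h last
        rw [Pi.zero_apply, eF_apply_same] at this
        exact absurd this (by decide)
      · exact ⟨last, (zero_add _).symm⟩
    have hGr := hadj2 0 (eF last) hQm
    have hf0 : f 0 = u := by
      have := hf_low 0 (fun k _ => rfl)
      rw [this, Pi.zero_apply, zero_smul, add_zero]
    have hfl : f (eF last) = u + eF i := by
      have := hf_low (eF last) (fun k hk => eF_apply_ne hk)
      rw [this, eF_apply_same, one_smul]
    rw [hf0, hfl, gr_adj] at hGr
    rcases hGr.2 with h | h
    · exact huH h
    · exact hvH h

end Main4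


lemma arith_key {m n x : ℕ} (hm2 : 2 ≤ m) (hx : 4 ≤ x) (hn : n + 1 ≤ m * (2 * x - 1)) :
    m * (n + (x - 1)) < (2 * m ^ 2 + m) * x := by
  obtain ⟨x', rfl⟩ : ∃ x', x = x' + 1 := ⟨x - 1, by omega⟩
  have hsub1 : x' + 1 - 1 = x' := by omega
  have hsub2 : 2 * (x' + 1) - 1 = 2 * x' + 1 := by omega
  rw [hsub1]
  rw [hsub2] at hn
  have h1 : m * (n + 1) ≤ m * (m * (2 * x' + 1)) := Nat.mul_le_mul_left m hn
  nlinarith [h1, hm2, sq_nonneg m]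

theorem stmt_3' (n m : ℕ) (hm : 1 ≤ m) :
    ∃ G : SimpleGraph (Fin n → ZMod 2), SemiSaturated n m G ∧
      (G.edgeSet.ncard : ℝ) < ((m : ℝ) ^ 2 + (m : ℝ) / 2) * 2 ^ n := by
  rcases eq_or_lt_of_le hm with hm1 | hm2
  · -- m = 1 : the empty graph works
    refine ⟨⊥, by rw [← hm1]; exact semiSat_bot n, ?_⟩
    rw [SimpleGraph.edgeSet_bot, Set.ncard_empty]
    have hmr : (1:ℝ) ≤ (m:ℝ) := by exact_mod_cast hm
    have h2 : (0:ℝ) < 2 ^ n := by positivity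
    push_cast
    nlinarith
  · have hm2' : 2 ≤ m := hm2
    by_cases hsmall : n < 2 * m ^ 2 + m
    · -- small n : the full hypercube works
      apply final_of_nat_bound (Qc n) ⟨le_rfl, fun e he hne => absurd he hne⟩
      calc (Qc n).edgeSet.ncard * 2 ≤ n * 2 ^ n := qc_edge_bound n
        _ < (2 * m ^ 2 + m) * 2 ^ n :=
          (Nat.mul_lt_mul_right (Nat.pow_pos (n := n) (by norm_num))).mpr hsmall
    · push_neg at hsmall
      -- choose the block length ℓ : the largest with m * (2^ℓ - 1) ≤ n
      have h3m : m * 3 ≤ n := by nlinarith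
      have hP2 : m * (2 ^ 2 - 1) ≤ n := by norm_num; omega
      have h2n : 2 ≤ n := by nlinarith
      set ℓ : ℕ := Nat.findGreatest (fun l => m * (2 ^ l - 1) ≤ n) n with hℓ
      have hl2 : 2 ≤ ℓ := by
        rw [hℓ]; exact Nat.le_findGreatest h2n hP2
      have hfit : m * (2 ^ ℓ - 1) ≤ n := by
        rw [hℓ]
        exact Nat.findGreatest_spec (P := fun l => m * (2 ^ l - 1) ≤ n) h2n hP2
      have hlen : ℓ ≤ n := by
        rw [hℓ]; exact Nat.findGreatest_le n
      have hln : ℓ < n := by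
        rcases lt_or_eq_of_le hlen with h | h
        · exact h
        · exfalso
          have hfit' := hfit
          rw [h] at hfit'
          have hpow : n < 2 ^ n := Nat.lt_two_pow_self
          have : 2 * (2 ^ n - 1) ≤ m * (2 ^ n - 1) := Nat.mul_le_mul_right _ hm2'
          omega
      have hgt : ¬ (m * (2 ^ (ℓ + 1) - 1) ≤ n) := by
        have h1 : Nat.findGreatest (fun l => m * (2 ^ l - 1) ≤ n) n < ℓ + 1 := by
          rw [← hℓ]; omega
        exact Nat.findGreatest_is_greatest (P := fun l => m * (2 ^ l - 1) ≤ n) h1 (by omega)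
      have hmax : n < m * (2 ^ (ℓ + 1) - 1) := by
        push_neg at hgt; exact hgt
      -- the construction
      apply final_of_nat_bound (Gr hfit) (gr_semisat hm2' hl2 hfit)
      -- arithmetic
      have hx4 : 4 ≤ 2 ^ ℓ := by
        calc (4:ℕ) = 2 ^ 2 := rfl
          _ ≤ 2 ^ ℓ := Nat.pow_le_pow_right (by norm_num) hl2
      have hn1 : n + 1 ≤ m * (2 * 2 ^ ℓ - 1) := by
        have h21 : 2 ^ (ℓ + 1) = 2 * 2 ^ ℓ := by rw [pow_succ]; ring
        rw [← h21]
        omega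
      have key2 : m * (n + (2 ^ ℓ - 1)) < (2 * m ^ 2 + m) * 2 ^ ℓ :=
        arith_key hm2' hx4 hn1
      have key1 : (Gr hfit).edgeSet.ncard * 2 ^ (ℓ + 1) ≤ m * ((n + (2 ^ ℓ - 1)) * 2 ^ n) :=
        gr_count hl2 hfit
      have key3 : ((Gr hfit).edgeSet.ncard * 2) * 2 ^ ℓ < ((2 * m ^ 2 + m) * 2 ^ n) * 2 ^ ℓ := by
        calc ((Gr hfit).edgeSet.ncard * 2) * 2 ^ ℓ
            = (Gr hfit).edgeSet.ncard * 2 ^ (ℓ + 1) := by rw [pow_succ]; ring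
          _ ≤ m * ((n + (2 ^ ℓ - 1)) * 2 ^ n) := key1
          _ = (m * (n + (2 ^ ℓ - 1))) * 2 ^ n := by ring
          _ < ((2 * m ^ 2 + m) * 2 ^ ℓ) * 2 ^ n :=
              (Nat.mul_lt_mul_right (Nat.pow_pos (n := n) (by norm_num))).mpr key2
          _ = ((2 * m ^ 2 + m) * 2 ^ n) * 2 ^ ℓ := by ring
      exact Nat.lt_of_mul_lt_mul_right key3

/-- `s-sat(Q_n, Q_m) < (m² + m/2)·2^n` for all `n` and all `m ≥ 1`: there is a
`(Q_n,Q_m)`-semi-saturated subgraph of `Q_n` with fewer than `(m² + m/2)·2^n` edges. -/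
theorem stmt_3 (n m : ℕ) (hm : 1 ≤ m) :
    ∃ G : SimpleGraph (Fin n → ZMod 2), SemiSaturated n m G ∧
      (G.edgeSet.ncard : ℝ) < ((m : ℝ) ^ 2 + (m : ℝ) / 2) * 2 ^ n := by
  exact stmt_3' n m hm
end

section
/- w-sat(Q_n, Q_2) = 2^n − 1 for all n ≥ 1. That is, there exists a weakly (Q_n, Q_2)-saturated spanning tree of Q_n, and no weakly (Q_n, Q_2)-saturated graph has fewer than 2^n − 1 edges. -/
/-- `G` is weakly `(Q_n, Q_m)`-saturated: the edges of `Q_n` missing from `G` can be added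
one at a time, in some order, so that each newly added edge creates a new copy of `Q_m`. -/
def WeaklySaturated (n m : ℕ) (G : SimpleGraph (Fin n → ZMod 2)) : Prop :=
  G ≤ Qc n ∧ ∃ l : List (Sym2 (Fin n → ZMod 2)),
    l.Nodup ∧ (∀ e ∈ l, e ∈ (Qc n).edgeSet \ G.edgeSet) ∧
    (Qc n).edgeSet ⊆ G.edgeSet ∪ {e | e ∈ l} ∧
    ∀ i : Fin l.length,
      NewCube m (G ⊔ SimpleGraph.fromEdgeSet {e | e ∈ l.take i.1}) (l.get i)

/-- The weak saturation number `w-sat(Q_n, Q_m)`. -/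
noncomputable def wsatNum (n m : ℕ) : ℕ :=
  sInf {k | ∃ G : SimpleGraph (Fin n → ZMod 2), WeaklySaturated n m G ∧ G.edgeSet.ncard = k}


namespace WSat

abbrev V (n : ℕ) := Fin n → ZMod 2

lemma zmod2_cases (a : ZMod 2) : a = 0 ∨ a = 1 := by revert a; decide

lemma zmod2_add_eq_zero {a b : ZMod 2} (h : a + b = 0) : b = a := by
  revert h; revert a b; decide

lemma vec_add_eq_zero' {n : ℕ} {u v : V n} (h : u + v = 0) : v = u := by
  funext k
  have hk := congrFun h k
  simp only [Pi.add_apply, Pi.zero_apply] at hk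
  exact zmod2_add_eq_zero hk

lemma zmod2_ne_iff {a b : ZMod 2} : a ≠ b ↔ b = a + 1 := by revert a b; decide

def unit {n : ℕ} (j : Fin n) : V n := Pi.single j 1

lemma unit_apply {n : ℕ} (j k : Fin n) : unit j k = if k = j then 1 else 0 := by
  unfold unit
  rcases eq_or_ne k j with rfl | h
  · simp
  · simp [Pi.single_eq_of_ne h, h]

lemma add_unit_ne {n : ℕ} (x : V n) (j : Fin n) : x + unit j ≠ x := by
  intro h
  have := congrFun h j
  simp [unit_apply] at this

lemma hamming_eq {n : ℕ} (x y : V n) :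
    hammingDist x y = (Finset.univ.filter fun i => x i ≠ y i).card := rfl

lemma hamming_one {n : ℕ} {x y : V n} (h : hammingDist x y = 1) : ∃ j, y = x + unit j := by
  rw [hamming_eq, Finset.card_eq_one] at h
  obtain ⟨j, hj⟩ := h
  refine ⟨j, funext fun k => ?_⟩
  rcases eq_or_ne k j with hkj | hk
  · have hmem : j ∈ Finset.univ.filter fun i => x i ≠ y i := hj ▸ Finset.mem_singleton_self j
    have hne : x j ≠ y j := by simpa using hmem
    rw [hkj]
    simp only [Pi.add_apply, unit_apply, if_pos rfl]
    exact zmod2_ne_iff.mp hne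
  · have hmem : k ∉ Finset.univ.filter fun i => x i ≠ y i := by
      rw [hj]; simpa using hk
    simp only [Finset.mem_filter, Finset.mem_univ, true_and, not_not] at hmem
    simp [unit_apply, hk, hmem]

lemma hamming_unit {n : ℕ} (x : V n) (j : Fin n) : hammingDist x (x + unit j) = 1 := by
  rw [hamming_eq, Finset.card_eq_one]
  refine ⟨j, Finset.eq_singleton_iff_unique_mem.mpr ⟨?_, fun k hk => ?_⟩⟩
  · simp only [Finset.mem_filter, Finset.mem_univ, true_and, Pi.add_apply, unit_apply,
      if_pos rfl]
    generalize x j = a; revert a; decide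
  · simp only [Finset.mem_filter, Finset.mem_univ, true_and] at hk
    by_contra h
    apply hk
    simp [unit_apply, if_neg h]

lemma qc_adj_iff {n : ℕ} {x y : V n} : (Qc n).Adj x y ↔ ∃ j, y = x + unit j := by
  constructor
  · rintro ⟨hne, h | h⟩
    · exact hamming_one h
    · obtain ⟨j, hj⟩ := hamming_one h
      refine ⟨j, ?_⟩
      rw [hj]
      funext k
      simp only [Pi.add_apply]
      generalize y k = a
      generalize unit j k = b
      revert a b; decide
  · rintro ⟨j, rfl⟩
    exact ⟨(add_unit_ne x j).symm, Or.inl (hamming_unit x j)⟩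

lemma addadd {n : ℕ} (x u : V n) : x + u + u = x := by
  funext k
  simp only [Pi.add_apply]
  generalize x k = a; generalize u k = b
  revert a b; decide

lemma unit_inj {n : ℕ} {j j' : Fin n} (h : unit j = unit j') : j = j' := by
  by_contra hne
  have := congrFun h j
  rw [unit_apply, unit_apply, if_pos rfl, if_neg hne] at this
  exact one_ne_zero this

def supp {n : ℕ} (x : V n) : Finset (Fin n) := Finset.univ.filter (fun j => x j = 1)

lemma mem_supp {n : ℕ} {x : V n} {j : Fin n} : j ∈ supp x ↔ x j = 1 := by
  simp [supp]

lemma supp_empty_iff {n : ℕ} {x : V n} : ¬(supp x).Nonempty ↔ x = 0 := by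
  rw [Finset.not_nonempty_iff_eq_empty]
  constructor
  · intro h
    funext k
    have : k ∉ supp x := h ▸ Finset.notMem_empty k
    rcases zmod2_cases (x k) with h1 | h1
    · exact h1
    · exact absurd (mem_supp.mpr h1) this
  · rintro rfl
    ext k
    simp [mem_supp]

lemma supp_add_unit {n : ℕ} {x : V n} {j : Fin n} (h : x j = 1) :
    supp (x + unit j) = (supp x).erase j := by
  ext k
  rcases eq_or_ne k j with rfl | hk
  · simp [mem_supp, unit_apply, h]
  · simp [mem_supp, unit_apply, hk, Finset.mem_erase]

def trel {n : ℕ} (x y : V n) : Prop :=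
  ∃ j, x j = 1 ∧ (∀ k, x k = 1 → k ≤ j) ∧ y = x + unit j

def T (n : ℕ) : SimpleGraph (V n) := SimpleGraph.fromRel trel

lemma T_le_Qc {n : ℕ} : T n ≤ Qc n := by
  rintro x y ⟨hne, ⟨j, _, _, rfl⟩ | ⟨j, _, _, rfl⟩⟩
  · exact qc_adj_iff.mpr ⟨j, rfl⟩
  · exact qc_adj_iff.mpr ⟨j, (addadd y (unit j)).symm⟩

lemma qc_edge_rep {n : ℕ} {e : Sym2 (V n)} (he : e ∈ (Qc n).edgeSet) :
    ∃ u j, e = s(u, u + unit j) ∧ u j = 1 := by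
  induction e using Sym2.ind with
  | _ a b =>
    rw [SimpleGraph.mem_edgeSet] at he
    obtain ⟨j, rfl⟩ := qc_adj_iff.mp he
    rcases zmod2_cases (a j) with h1 | h1
    · refine ⟨a + unit j, j, ?_, by simp [unit_apply, h1]⟩
      rw [addadd, Sym2.eq_swap]
    · exact ⟨a, j, rfl, h1⟩

lemma mem_T_iff {n : ℕ} {u : V n} {j : Fin n} (h : u j = 1) :
    s(u, u + unit j) ∈ (T n).edgeSet ↔ ∀ k, u k = 1 → k ≤ j := by
  rw [SimpleGraph.mem_edgeSet]
  constructor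
  · rintro ⟨hne, ⟨j', h1, h2, h3⟩ | ⟨j', h1, h2, h3⟩⟩
    · have huj : unit j = unit j' := add_left_cancel h3
      rwa [← unit_inj huj] at h2
    · have huj : unit j' = unit j := by
        have : u + unit j + unit j' = u + unit j + unit j := by
          rw [← h3, addadd]
        exact add_left_cancel this
      rw [unit_inj huj] at h1
      simp [unit_apply, h] at h1
  · intro htop
    exact ⟨(add_unit_ne u j).symm, Or.inl ⟨j, h, htop, rfl⟩⟩

lemma T_reach_zero {n : ℕ} (x : V n) : (T n).Reachable x 0 := by
  generalize hc : (supp x).card = c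
  induction c using Nat.strong_induction_on generalizing x with
  | _ c ih =>
    by_cases hx : (supp x).Nonempty
    · set j := (supp x).max' hx with hj
      have hxj : x j = 1 := mem_supp.mp ((supp x).max'_mem hx)
      have hadj : (T n).Adj x (x + unit j) :=
        ⟨(add_unit_ne x j).symm, Or.inl ⟨j, hxj, fun k hk => (supp x).le_max' k (mem_supp.mpr hk), rfl⟩⟩
      have hpos : 0 < c := hc ▸ Finset.card_pos.mpr hx
      have hcard : (supp (x + unit j)).card < c := by
        rw [supp_add_unit hxj, Finset.card_erase_of_mem ((supp x).max'_mem hx), hc]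
        omega
      exact hadj.reachable.trans (ih _ hcard _ rfl)
    · rw [supp_empty_iff.mp hx]

lemma T_connected {n : ℕ} : (T n).Connected := by
  rw [SimpleGraph.connected_iff]
  exact ⟨fun a b => (T_reach_zero a).trans (T_reach_zero b).symm, ⟨0⟩⟩

noncomputable def gmap {n : ℕ} (x : V n) : Sym2 (V n) :=
  if h : (supp x).Nonempty then s(x, x + unit ((supp x).max' h)) else s(x, x)

lemma T_edgeSet_eq {n : ℕ} : (T n).edgeSet = gmap '' {x : V n | x ≠ 0} := by
  ext e
  constructor
  · intro he
    induction e using Sym2.ind with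
    | _ a b =>
      rw [SimpleGraph.mem_edgeSet] at he
      obtain ⟨hne, h | h⟩ := he
      · obtain ⟨j, h1, h2, h3⟩ := h
        subst h3
        refine ⟨a, fun h0 => by simp [h0] at h1, ?_⟩
        have hx : (supp a).Nonempty := ⟨j, mem_supp.mpr h1⟩
        have hmax : (supp a).max' hx = j :=
          le_antisymm (Finset.max'_le _ _ _ (fun k hk => h2 k (mem_supp.mp hk)))
            (Finset.le_max' _ _ (mem_supp.mpr h1))
        rw [gmap, dif_pos hx, hmax]
      · obtain ⟨j, h1, h2, h3⟩ := h
        subst h3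
        refine ⟨b, fun h0 => by simp [h0] at h1, ?_⟩
        have hx : (supp b).Nonempty := ⟨j, mem_supp.mpr h1⟩
        have hmax : (supp b).max' hx = j :=
          le_antisymm (Finset.max'_le _ _ _ (fun k hk => h2 k (mem_supp.mp hk)))
            (Finset.le_max' _ _ (mem_supp.mpr h1))
        rw [gmap, dif_pos hx, hmax]
        exact Sym2.eq_swap
  · rintro ⟨x, hx0, rfl⟩
    have hx : (supp x).Nonempty := by
      by_contra h
      exact hx0 (supp_empty_iff.mp h)
    rw [gmap, dif_pos hx]
    set j := (supp x).max' hx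
    exact ⟨(add_unit_ne x j).symm,
      Or.inl ⟨j, mem_supp.mp ((supp x).max'_mem hx),
        fun k hk => (supp x).le_max' k (mem_supp.mpr hk), rfl⟩⟩

lemma gmap_injOn {n : ℕ} : Set.InjOn gmap {x : V n | x ≠ 0} := by
  intro x hx y hy hxy
  have hxne : (supp x).Nonempty := by
    by_contra h; exact hx (supp_empty_iff.mp h)
  have hyne : (supp y).Nonempty := by
    by_contra h; exact hy (supp_empty_iff.mp h)
  rw [gmap, gmap, dif_pos hxne, dif_pos hyne, Sym2.eq_iff] at hxy
  set jx := (supp x).max' hxne with hjx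
  set jy := (supp y).max' hyne with hjy
  rcases hxy with ⟨h1, _⟩ | ⟨h1, h2⟩
  · exact h1
  · exfalso
    have hux : unit jy = unit jx := by
      have hstep : x + (unit jx + unit jy) = x + 0 := by
        rw [← add_assoc, h2, add_zero]
        exact h1.symm
      have h0 : unit jx + unit jy = 0 := add_left_cancel hstep
      funext k
      have hk := congrFun h0 k
      simp only [Pi.add_apply, Pi.zero_apply] at hk
      exact zmod2_add_eq_zero hk
    have hxjx : x jx = 1 := mem_supp.mp ((supp x).max'_mem hxne)
    have hyjy : y jy = 1 := mem_supp.mp ((supp y).max'_mem hyne)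
    rw [unit_inj hux] at hyjy
    have hxy' := congrFun h1 jx
    rw [Pi.add_apply, hyjy, hux, unit_apply, if_pos rfl, hxjx] at hxy'
    exact absurd hxy' (by decide)

lemma card_V {n : ℕ} : Fintype.card (V n) = 2 ^ n := by
  rw [Fintype.card_fun]
  simp [ZMod.card]

lemma T_card {n : ℕ} : (T n).edgeSet.ncard = 2 ^ n - 1 := by
  rw [T_edgeSet_eq, Set.ncard_image_of_injOn gmap_injOn]
  have h1 : {x : V n | x ≠ 0} = ({0} : Set (V n))ᶜ := by
    ext x; simp
  rw [h1]
  have h2 := Set.ncard_add_ncard_compl ({0} : Set (V n))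
  rw [Set.ncard_singleton] at h2
  have h3 : Nat.card (V n) = 2 ^ n := by
    rw [Nat.card_eq_fintype_card, card_V]
  omega

lemma reach_mono {W : Type*} {H K : SimpleGraph W}
    (h : ∀ a b, H.Adj a b → K.Reachable a b) {a b : W} (hr : H.Reachable a b) :
    K.Reachable a b := by
  obtain ⟨w⟩ := hr
  induction w with
  | nil => exact SimpleGraph.Reachable.refl _
  | cons hadj _ ih => exact (h _ _ hadj).trans ih

section Counting

variable {W : Type*}

lemma exists_smaller [Fintype W] {G : SimpleGraph W} (hc : G.Connected)
    (hnac : ¬ G.IsAcyclic) :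
    ∃ G' : SimpleGraph W, G'.Connected ∧ G'.edgeSet ⊂ G.edgeSet := by
  rw [SimpleGraph.isAcyclic_iff_forall_adj_isBridge] at hnac
  push_neg at hnac
  obtain ⟨v, w, hadj, hnb⟩ := hnac
  rw [SimpleGraph.isBridge_iff, not_not] at hnb
  have hreach := hnb
  set G' := G \ SimpleGraph.fromEdgeSet {s(v, w)} with hG'
  have hadj' : ∀ a b, G.Adj a b → G'.Adj a b ∨ (s(a, b) = s(v, w)) := by
    intro a b hab
    by_cases he : s(a, b) = s(v, w)
    · exact Or.inr he
    · left
      rw [hG', SimpleGraph.sdiff_adj]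
      refine ⟨hab, fun hcon => he ?_⟩
      rw [SimpleGraph.fromEdgeSet_adj] at hcon
      simpa using hcon.1
  refine ⟨G', ?_, ?_⟩
  · rw [SimpleGraph.connected_iff]
    refine ⟨fun a b => ?_, hc.nonempty⟩
    refine reach_mono (fun a b hab => ?_) (hc.preconnected a b)
    rcases hadj' a b hab with h | h
    · exact h.reachable
    · rw [Sym2.eq_iff] at h
      rcases h with ⟨rfl, rfl⟩ | ⟨rfl, rfl⟩
      · exact hreach
      · exact hreach.symm
  · constructor
    · exact SimpleGraph.edgeSet_mono sdiff_le
    · intro hsub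
      have h1 : s(v, w) ∈ G.edgeSet := hadj
      have h2 := hsub h1
      rw [SimpleGraph.mem_edgeSet, hG', SimpleGraph.sdiff_adj] at h2
      exact h2.2 (by rw [SimpleGraph.fromEdgeSet_adj]; exact ⟨rfl, hadj.ne⟩)

lemma conn_card_aux [Fintype W] :
    ∀ k : ℕ, ∀ G : SimpleGraph W, G.Connected → G.edgeSet.ncard = k →
      Fintype.card W ≤ k + 1 := by
  intro k
  induction k using Nat.strong_induction_on with
  | _ k ih =>
    intro G hc hk
    by_cases hac : G.IsAcyclic
    · have htree : G.IsTree := ⟨hc, hac⟩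
      haveI : Fintype G.edgeSet := Fintype.ofFinite _
      have := htree.card_edgeFinset
      have hcard : G.edgeSet.ncard = G.edgeFinset.card := by
        rw [SimpleGraph.edgeFinset, Set.ncard_eq_toFinset_card']
      omega
    · obtain ⟨G', hc', hlt⟩ := exists_smaller hc hac
      have hfin : G.edgeSet.Finite := Set.toFinite _
      have hncard : G'.edgeSet.ncard < k := hk ▸ Set.ncard_lt_ncard hlt hfin
      have := ih _ hncard G' hc' rfl
      omega

lemma conn_card [Fintype W] {G : SimpleGraph W} (hc : G.Connected) :
    Fintype.card W ≤ G.edgeSet.ncard + 1 :=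
  conn_card_aux _ G hc rfl

lemma isTree_of_conn_card [Fintype W] {G : SimpleGraph W} (hc : G.Connected)
    (hcard : G.edgeSet.ncard + 1 = Fintype.card W) : G.IsTree := by
  refine ⟨hc, ?_⟩
  by_contra hac
  obtain ⟨G', hc', hlt⟩ := exists_smaller hc hac
  have hfin : G.edgeSet.Finite := Set.toFinite _
  have h1 : G'.edgeSet.ncard < G.edgeSet.ncard := Set.ncard_lt_ncard hlt hfin
  have h2 := conn_card hc'
  omega

end Counting

lemma unit_ne_of_ne {n : ℕ} {c c' : Fin n} (h : c ≠ c') : unit c ≠ unit c' :=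
  fun hc => h (unit_inj hc)

lemma newcube_reach {n : ℕ} {H : SimpleGraph (V n)} {e : Sym2 (V n)}
    (hnc : NewCube 2 H e) {a b : V n}
    (hr : (H ⊔ SimpleGraph.fromEdgeSet {e}).Reachable a b) : H.Reachable a b := by
  obtain ⟨f, ⟨hinj, hcopy⟩, hnot⟩ := hnc
  have hex : ∃ x y, (Qc 2).Adj x y ∧ ¬ H.Adj (f x) (f y) := by
    by_contra hcon
    push_neg at hcon
    exact hnot ⟨hinj, hcon⟩
  obtain ⟨x, y, hxy, hnadj⟩ := hex
  have hadj2 := hcopy x y hxy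
  have hfe : s(f x, f y) = e := by
    rcases hadj2 with h | h
    · exact absurd h hnadj
    · rw [SimpleGraph.fromEdgeSet_adj] at h
      simpa using h.1
  obtain ⟨c, rfl⟩ := qc_adj_iff.mp hxy
  have hc1 : (c : ℕ) < 2 := c.isLt
  set c' : Fin 2 := ⟨1 - (c : ℕ), by omega⟩ with hc'def
  have hcc : c' ≠ c := by
    rw [Fin.ne_iff_vne]
    simp only [hc'def]
    omega
  have key : ∀ p q, (Qc 2).Adj p q → ¬(p = x ∧ q = x + unit c) →
      ¬(p = x + unit c ∧ q = x) → H.Adj (f p) (f q) := by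
    intro p q hpq h1 h2
    rcases hcopy p q hpq with h | h
    · exact h
    · exfalso
      rw [SimpleGraph.fromEdgeSet_adj] at h
      have hmem := h.1
      rw [Set.mem_singleton_iff, ← hfe, Sym2.eq_iff] at hmem
      rcases hmem with ⟨ha, hb⟩ | ⟨ha, hb⟩
      · exact h1 ⟨hinj ha, hinj hb⟩
      · exact h2 ⟨hinj ha, hinj hb⟩
  have huc : unit c' ≠ unit c := unit_ne_of_ne hcc
  have e1 : H.Adj (f x) (f (x + unit c')) := by
    refine key _ _ (qc_adj_iff.mpr ⟨c', rfl⟩) ?_ ?_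
    · rintro ⟨-, h⟩
      exact huc (add_left_cancel h)
    · rintro ⟨h, -⟩
      exact add_unit_ne x c h.symm
  have e2 : H.Adj (f (x + unit c')) (f (x + unit c' + unit c)) := by
    refine key _ _ (qc_adj_iff.mpr ⟨c, rfl⟩) ?_ ?_
    · rintro ⟨h, -⟩
      exact add_unit_ne x c' h
    · rintro ⟨h, -⟩
      exact huc (add_left_cancel h)
  have hswap : x + unit c' + unit c + unit c' = x + unit c := by
    rw [add_right_comm x (unit c') (unit c), addadd]
  have e3 : H.Adj (f (x + unit c' + unit c)) (f (x + unit c)) := by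
    refine key _ _ (qc_adj_iff.mpr ⟨c', hswap.symm⟩) ?_ ?_
    · rintro ⟨h, -⟩
      rw [add_assoc] at h
      have h0 : unit c' + unit c = 0 := add_left_cancel (h.trans (add_zero x).symm)
      exact huc (vec_add_eq_zero' h0).symm
    · rintro ⟨-, h⟩
      exact add_unit_ne x c h
  have hR : H.Reachable (f x) (f (x + unit c)) :=
    e1.reachable.trans (e2.reachable.trans e3.reachable)
  refine reach_mono (fun a b hab => ?_) hr
  rcases hab with h | h
  · exact h.reachable
  · rw [SimpleGraph.fromEdgeSet_adj] at h
    have hmem := h.1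
    rw [Set.mem_singleton_iff, ← hfe, Sym2.eq_iff] at hmem
    rcases hmem with ⟨ha, hb⟩ | ⟨ha, hb⟩
    · rw [← ha, ← hb] at hR; exact hR
    · rw [← ha, ← hb] at hR; exact hR.symm

lemma prefix_reach {n : ℕ} (G : SimpleGraph (V n)) (l : List (Sym2 (V n)))
    (hl : ∀ i : Fin l.length,
      NewCube 2 (G ⊔ SimpleGraph.fromEdgeSet {e | e ∈ l.take i.1}) (l.get i)) :
    ∀ k, ∀ a b : V n,
      (G ⊔ SimpleGraph.fromEdgeSet {e | e ∈ l.take k}).Reachable a b → G.Reachable a b := by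
  intro k
  induction k with
  | zero =>
    intro a b hab
    simpa using hab
  | succ k ih =>
    intro a b hab
    by_cases hk : k < l.length
    · have htake : {e | e ∈ l.take (k + 1)} =
          {e | e ∈ l.take k} ∪ {l.get ⟨k, hk⟩} := by
        ext e
        rw [Set.mem_setOf_eq, List.take_succ]
        simp only [Set.mem_union, Set.mem_setOf_eq, Set.mem_singleton_iff, List.mem_append]
        constructor
        · rintro (h | h)
          · exact Or.inl h
          · right
            have : l[k]? = some (l.get ⟨k, hk⟩) := by
              rw [List.getElem?_eq_getElem hk]
              rfl
            rw [this] at h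
            simpa using h
        · rintro (h | h)
          · exact Or.inl h
          · right
            rw [List.getElem?_eq_getElem hk]
            simpa using h
      rw [htake, SimpleGraph.fromEdgeSet_union, ← sup_assoc] at hab
      have := newcube_reach (hl ⟨k, hk⟩) hab
      exact ih a b this
    · have : l.take (k + 1) = l.take k := by
        rw [List.take_of_length_le (by omega), List.take_of_length_le (by omega)]
      rw [this] at hab
      exact ih a b hab

lemma Qc_connected {n : ℕ} : (Qc n).Connected := by
  rw [SimpleGraph.connected_iff]
  refine ⟨fun a b => ?_, ⟨0⟩⟩
  exact reach_mono (fun a b hab => (T_le_Qc hab).reachable) (T_connected.preconnected a b)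

lemma ws_connected {n : ℕ} {G : SimpleGraph (V n)} (hws : WeaklySaturated n 2 G) :
    G.Connected := by
  obtain ⟨hle, l, hnd, hmem, hcover, hnew⟩ := hws
  rw [SimpleGraph.connected_iff]
  refine ⟨fun a b => ?_, ⟨0⟩⟩
  have hQ : (Qc n).Reachable a b := Qc_connected.preconnected a b
  have hsup : (G ⊔ SimpleGraph.fromEdgeSet {e | e ∈ l.take l.length}).Reachable a b := by
    refine reach_mono (fun a b hab => ?_) hQ
    have hedge : s(a, b) ∈ G.edgeSet ∪ {e | e ∈ l} := hcover hab
    rw [List.take_length]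
    rcases hedge with h | h
    · exact SimpleGraph.Adj.reachable
        (by rw [SimpleGraph.sup_adj]; exact Or.inl ((SimpleGraph.mem_edgeSet G).mp h))
    · refine SimpleGraph.Adj.reachable ?_
      rw [SimpleGraph.sup_adj, SimpleGraph.fromEdgeSet_adj]
      exact Or.inr ⟨h, hab.ne⟩
  exact prefix_reach G l hnew l.length a b hsup

lemma ws_card_lb {n : ℕ} {G : SimpleGraph (V n)} (hws : WeaklySaturated n 2 G) :
    2 ^ n - 1 ≤ G.edgeSet.ncard := by
  have hc := ws_connected hws
  have := conn_card hc
  rw [card_V] at this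
  omega

def S2 {n : ℕ} : Sym2 (V n) → ℕ :=
  Sym2.lift ⟨fun x y => ((supp x ∪ supp y).sup Fin.val), by
    intro x y
    simp only [Finset.union_comm]⟩

lemma S2_mk {n : ℕ} (x y : V n) : S2 s(x, y) = (supp x ∪ supp y).sup Fin.val :=
  Sym2.lift_mk _ x y

lemma S2_eq {n : ℕ} {u : V n} {j : Fin n} (h : u j = 1) :
    S2 s(u, u + unit j) = (supp u).sup Fin.val := by
  rw [S2_mk, supp_add_unit h, Finset.union_eq_left.mpr (Finset.erase_subset _ _)]

noncomputable def nonTree (n : ℕ) : Finset (Sym2 (V n)) :=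
  (Set.toFinite ((Qc n).edgeSet \ (T n).edgeSet)).toFinset

noncomputable def satList (n : ℕ) : List (Sym2 (V n)) :=
  (nonTree n).toList.mergeSort (fun a b => decide (S2 a ≤ S2 b))

lemma mem_satList {n : ℕ} {e : Sym2 (V n)} :
    e ∈ satList n ↔ e ∈ (Qc n).edgeSet \ (T n).edgeSet := by
  rw [satList, (List.mergeSort_perm _ _).mem_iff, Finset.mem_toList, nonTree,
    Set.Finite.mem_toFinset]

lemma satList_nodup {n : ℕ} : (satList n).Nodup :=
  ((List.mergeSort_perm _ _).nodup_iff).mpr (Finset.nodup_toList _)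

lemma satList_sorted {n : ℕ} : (satList n).Pairwise (fun a b => S2 a ≤ S2 b) := by
  have h := List.pairwise_mergeSort (le := fun a b : Sym2 (V n) => decide (S2 a ≤ S2 b))
    (fun a b c h1 h2 => by
      simp only [decide_eq_true_eq] at *
      omega)
    (fun a b => by
      simp only [Bool.or_eq_true, decide_eq_true_eq]
      omega)
    (nonTree n).toList
  exact h.imp (fun hab => by simpa using hab)

lemma zmod2_ite_inj : ∀ a b : ZMod 2,
    (if a = 1 then (1 : ZMod 2) else 0) = (if b = 1 then 1 else 0) → a = b := by decide

lemma T_weaklySaturated {n : ℕ} : WeaklySaturated n 2 (T n) := by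
  refine ⟨T_le_Qc, satList n, satList_nodup, ?_, ?_, ?_⟩
  · intro e he
    exact mem_satList.mp he
  · intro e he
    by_cases ht : e ∈ (T n).edgeSet
    · exact Or.inl ht
    · exact Or.inr (mem_satList.mpr ⟨he, ht⟩)
  · intro i
    have hel : (satList n).get i ∈ satList n := by
      simp only [List.get_eq_getElem]
      exact List.getElem_mem i.2
    obtain ⟨heQ, heT⟩ := mem_satList.mp hel
    obtain ⟨u, j, herep, huj⟩ := qc_edge_rep heQ
    rw [herep]
    have hnt : ¬ ∀ k, u k = 1 → k ≤ j := fun h => heT (herep ▸ (mem_T_iff huj).mpr h)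
    push_neg at hnt
    obtain ⟨k0, hk0, hk0j⟩ := hnt
    have hsu : (supp u).Nonempty := ⟨j, mem_supp.mpr huj⟩
    set m := (supp u).max' hsu with hm
    have hum : u m = 1 := mem_supp.mp ((supp u).max'_mem hsu)
    have hmtop : ∀ k, u k = 1 → k ≤ m := fun k hk => (supp u).le_max' k (mem_supp.mpr hk)
    have hjm : j < m := lt_of_lt_of_le hk0j (hmtop k0 hk0)
    have hjmv : (j : ℕ) < (m : ℕ) := hjm
    have hjm' : j ≠ m := ne_of_lt hjm
    have hmj' : m ≠ j := (ne_of_lt hjm).symm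
    have hsup_eq : (supp u).sup Fin.val = (m : ℕ) :=
      le_antisymm (Finset.sup_le fun b hb => (supp u).le_max' b hb)
        (Finset.le_sup ((supp u).max'_mem hsu))
    have hS2e : S2 ((satList n).get i) = (m : ℕ) := by rw [herep, S2_eq huj, hsup_eq]
    set H := T n ⊔ SimpleGraph.fromEdgeSet {e' | e' ∈ (satList n).take i.1} with hH
    set H' := H ⊔ SimpleGraph.fromEdgeSet {s(u, u + unit j)} with hH'
    have hvm : (u + unit j) m = 1 := by
      rw [Pi.add_apply, unit_apply, if_neg hmj', add_zero]; exact hum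
    have humj : (u + unit m) j = 1 := by
      rw [Pi.add_apply, unit_apply, if_neg hjm', add_zero]; exact huj
    have A1 : H'.Adj u (u + unit j) := by
      rw [hH', SimpleGraph.sup_adj, SimpleGraph.fromEdgeSet_adj]
      exact Or.inr ⟨rfl, (add_unit_ne u j).symm⟩
    have A3 : H'.Adj u (u + unit m) := by
      rw [hH', hH, SimpleGraph.sup_adj, SimpleGraph.sup_adj]
      exact Or.inl (Or.inl ⟨(add_unit_ne u m).symm, Or.inl ⟨m, hum, hmtop, rfl⟩⟩)
    have A4 : H'.Adj (u + unit j) (u + unit j + unit m) := by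
      rw [hH', hH, SimpleGraph.sup_adj, SimpleGraph.sup_adj]
      refine Or.inl (Or.inl ⟨(add_unit_ne _ m).symm, Or.inl ⟨m, hvm, fun k hk => ?_, rfl⟩⟩)
      have hks : k ∈ supp (u + unit j) := mem_supp.mpr hk
      rw [supp_add_unit huj] at hks
      exact hmtop k (mem_supp.mp (Finset.mem_of_mem_erase hks))
    have A2 : H'.Adj (u + unit m) (u + unit m + unit j) := by
      have heQ' : s(u + unit m, u + unit m + unit j) ∈ (Qc n).edgeSet :=
        qc_adj_iff.mpr ⟨j, rfl⟩
      by_cases ht' : s(u + unit m, u + unit m + unit j) ∈ (T n).edgeSet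
      · rw [hH', hH, SimpleGraph.sup_adj, SimpleGraph.sup_adj]
        exact Or.inl (Or.inl ht')
      · have hS2' : S2 s(u + unit m, u + unit m + unit j) < (m : ℕ) := by
          rw [S2_eq humj, supp_add_unit hum]
          refine (Finset.sup_lt_iff (by simp only [bot_eq_zero]; omega)).mpr fun b hb => ?_
          obtain ⟨hbm, hbu⟩ := Finset.mem_erase.mp hb
          have hble : (b : ℕ) ≤ (m : ℕ) := (supp u).le_max' b hbu
          have hbne : (b : ℕ) ≠ (m : ℕ) := fun hc => hbm (Fin.ext hc)
          omega
        have hmem' : s(u + unit m, u + unit m + unit j) ∈ satList n := mem_satList.mpr ⟨heQ', ht'⟩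
        obtain ⟨i', hi', hgi'⟩ := List.mem_iff_getElem.mp hmem'
        have hii : i' < i.1 := by
          by_contra hcon
          push_neg at hcon
          rcases Nat.eq_or_lt_of_le hcon with hEq | hlt
          · have hgg : (satList n).get i = s(u + unit m, u + unit m + unit j) := by
              rw [show i = (⟨i', hi'⟩ : Fin (satList n).length) from Fin.ext hEq]
              simp only [List.get_eq_getElem]
              exact hgi'
            rw [hgg] at hS2e
            omega
          · have hs := satList_sorted.rel_get_of_lt
              (show i < (⟨i', hi'⟩ : Fin (satList n).length) from hlt)
            have hge : S2 ((satList n).get (⟨i', hi'⟩ : Fin (satList n).length)) =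
                S2 s(u + unit m, u + unit m + unit j) := by
              simp only [List.get_eq_getElem]
              rw [hgi']
            rw [hge, hS2e] at hs
            omega
        have htake : s(u + unit m, u + unit m + unit j) ∈ (satList n).take i.1 := by
          rw [List.mem_iff_getElem]
          refine ⟨i', by simp only [List.length_take]; omega, ?_⟩
          rw [List.getElem_take]
          exact hgi'
        rw [hH', hH, SimpleGraph.sup_adj, SimpleGraph.sup_adj, SimpleGraph.fromEdgeSet_adj]
        exact Or.inl (Or.inr ⟨htake, (add_unit_ne _ j).symm⟩)
    set f : (Fin 2 → ZMod 2) → V n :=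
      fun a => u + (if a 0 = 1 then unit j else 0) + (if a 1 = 1 then unit m else 0) with hf
    have hiteF : ∀ w : V n, (if (0 : ZMod 2) = 1 then w else 0) = 0 := fun w => if_neg (by decide)
    have hiteT : ∀ w : V n, (if (1 : ZMod 2) = 1 then w else 0) = w := fun w => if_pos rfl
    have hfm : ∀ a, f a m = 1 + (if a 1 = 1 then 1 else 0) := by
      intro a
      show (u + (if a 0 = 1 then unit j else 0) + (if a 1 = 1 then unit m else 0)) m = _
      simp only [Pi.add_apply]
      rw [apply_ite (fun g : V n => g m), apply_ite (fun g : V n => g m)]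
      simp [unit_apply, hmj', hum]
    have hfj : ∀ a, f a j = 1 + (if a 0 = 1 then 1 else 0) := by
      intro a
      show (u + (if a 0 = 1 then unit j else 0) + (if a 1 = 1 then unit m else 0)) j = _
      simp only [Pi.add_apply]
      rw [apply_ite (fun g : V n => g j), apply_ite (fun g : V n => g j)]
      simp only [unit_apply, if_pos rfl, if_neg hjm', Pi.zero_apply, huj]
      rcases zmod2_cases (a 1) with h' | h' <;> simp [h']
    have hinj : Function.Injective f := by
      intro a b hab
      have h1 : a 1 = b 1 := by
        have hcm := congrFun hab m
        rw [hfm, hfm] at hcm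
        exact zmod2_ite_inj _ _ (add_left_cancel hcm)
      have h0 : a 0 = b 0 := by
        have hcj := congrFun hab j
        rw [hfj, hfj] at hcj
        exact zmod2_ite_inj _ _ (add_left_cancel hcj)
      funext k
      fin_cases k
      · exact h0
      · exact h1
    have hval : ∀ a : Fin 2 → ZMod 2,
        f a = u + (if a 0 = 1 then unit j else 0) + (if a 1 = 1 then unit m else 0) :=
      fun a => rfl
    have hstep0 : ∀ a : Fin 2 → ZMod 2, f (a + unit 0) = f a + unit j := by
      intro a
      rw [hval, hval]
      have h00 : (a + unit (0 : Fin 2)) 0 = a 0 + 1 := by simp [unit_apply]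
      have h01 : (a + unit (0 : Fin 2)) 1 = a 1 := by simp [unit_apply]
      rw [h00, h01]
      rcases zmod2_cases (a 0) with h | h <;> rw [h]
      · rw [hiteF, show (0 : ZMod 2) + 1 = 1 from by decide, hiteT, add_zero]
        rw [add_right_comm]
      · rw [hiteT, show (1 : ZMod 2) + 1 = 0 from by decide, hiteF, add_zero]
        rw [add_right_comm (u + unit j) _ (unit j), addadd]
    have hstep1 : ∀ a : Fin 2 → ZMod 2, f (a + unit 1) = f a + unit m := by
      intro a
      rw [hval, hval]
      have h10 : (a + unit (1 : Fin 2)) 0 = a 0 := by simp [unit_apply]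
      have h11 : (a + unit (1 : Fin 2)) 1 = a 1 + 1 := by simp [unit_apply]
      rw [h10, h11]
      rcases zmod2_cases (a 1) with h | h <;> rw [h]
      · rw [hiteF, show (0 : ZMod 2) + 1 = 1 from by decide, hiteT, add_zero]
      · rw [hiteT, show (1 : ZMod 2) + 1 = 0 from by decide, hiteF, add_zero, addadd]
    refine ⟨f, ⟨hinj, ?_⟩, ?_⟩
    · intro x y hxy
      obtain ⟨c, rfl⟩ := qc_adj_iff.mp hxy
      have hfin2 : c = 0 ∨ c = 1 := by omega
      rcases hfin2 with rfl | rfl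
      · rw [hstep0]
        rcases zmod2_cases (x 0) with h0 | h0 <;> rcases zmod2_cases (x 1) with h1 | h1 <;>
            rw [hval, h0, h1]
        · rw [hiteF, hiteF, add_zero, add_zero]
          exact A1
        · rw [hiteF, hiteT, add_zero]
          exact A2
        · rw [hiteT, hiteF, add_zero]
          rw [show u + unit j + unit j = u from addadd u (unit j)]
          exact A1.symm
        · rw [hiteT, hiteT]
          rw [add_right_comm u (unit j) (unit m), addadd (u + unit m) (unit j)]
          exact A2.symm
      · rw [hstep1]
        rcases zmod2_cases (x 0) with h0 | h0 <;> rcases zmod2_cases (x 1) with h1 | h1 <;>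
            rw [hval, h0, h1]
        · rw [hiteF, hiteF, add_zero, add_zero]
          exact A3
        · rw [hiteF, hiteT, add_zero, addadd u (unit m)]
          exact A3.symm
        · rw [hiteT, hiteF, add_zero]
          exact A4
        · rw [hiteT, hiteT, addadd (u + unit j) (unit m)]
          exact A4.symm
    · rintro ⟨-, hadjall⟩
      have hQadj : (Qc 2).Adj 0 (unit 0) := qc_adj_iff.mpr ⟨0, (zero_add _).symm⟩
      have hadj := hadjall 0 (unit 0) hQadj
      have hf00 : f 0 = u := by
        rw [hval]
        simp only [Pi.zero_apply]
        rw [hiteF, hiteF, add_zero, add_zero]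
      have hf0v : f (unit 0) = u + unit j := by
        rw [hval]
        have e0 : unit (0 : Fin 2) 0 = 1 := by rw [unit_apply, if_pos rfl]
        have e1 : unit (0 : Fin 2) 1 = 0 := by rw [unit_apply, if_neg (by decide)]
        rw [e0, e1, hiteT, hiteF, add_zero]
      rw [hf00, hf0v] at hadj
      rw [hH, SimpleGraph.sup_adj, SimpleGraph.fromEdgeSet_adj] at hadj
      rcases hadj with hadj | hadj
      · exact heT (herep ▸ (SimpleGraph.mem_edgeSet (T n)).mpr hadj)
      · have hmem := hadj.1
        rw [Set.mem_setOf_eq] at hmem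
        obtain ⟨i', hi', hgi'⟩ := List.mem_iff_getElem.mp hmem
        have hlen : i' < i.1 := by
          simp only [List.length_take] at hi'
          omega
        have hii' : i' < (satList n).length := by
          have := i.isLt
          omega
        rw [List.getElem_take] at hgi'
        have hfin : (⟨i', hii'⟩ : Fin (satList n).length) = i := by
          apply satList_nodup.get_inj_iff.mp
          simp only [List.get_eq_getElem]
          rw [hgi']
          exact herep.symm
        have hcontr : i' = i.1 := congrArg Fin.val hfin
        omega

end WSat

/-- `w-sat(Q_n, Q_2) = 2^n − 1` for `n ≥ 1`: there is a weakly `(Q_n,Q_2)`-saturated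
spanning tree of `Q_n`, and every weakly `(Q_n,Q_2)`-saturated graph has at least
`2^n − 1` edges. -/
theorem stmt_8 (n : ℕ) (hn : 1 ≤ n) :
    wsatNum n 2 = 2 ^ n - 1 ∧
    (∃ G : SimpleGraph (Fin n → ZMod 2), WeaklySaturated n 2 G ∧ G.IsTree) ∧
    (∀ G : SimpleGraph (Fin n → ZMod 2), WeaklySaturated n 2 G →
      2 ^ n - 1 ≤ G.edgeSet.ncard) := by
  have hpow : 1 ≤ 2 ^ n := Nat.one_le_two_pow
  have hT := WSat.T_weaklySaturated (n := n)
  have hTcard := WSat.T_card (n := n)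
  have hmem : (2 ^ n - 1) ∈
      {k | ∃ G : SimpleGraph (Fin n → ZMod 2), WeaklySaturated n 2 G ∧ G.edgeSet.ncard = k} :=
    ⟨WSat.T n, hT, hTcard⟩
  refine ⟨?_, ⟨WSat.T n, hT, ?_⟩, fun G hG => WSat.ws_card_lb hG⟩
  · refine le_antisymm (Nat.sInf_le hmem) (le_csInf ⟨_, hmem⟩ ?_)
    rintro k ⟨G, hG, rfl⟩
    exact WSat.ws_card_lb hG
  · refine WSat.isTree_of_conn_card WSat.T_connected ?_
    rw [hTcard, WSat.card_V]
    omega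
end
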